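/- arXiv:2010.03545 — 4 statements merged into one kernel-verified Lean document; each statement's English description precedes it below -/
import Mathlib

section
/- Let (V, h) be a finite-dimensional complex inner product space of complex dimension n ≥ 1. For every h-self-adjoint ℂ-linear endomorphism f of V, writing ω_f(x,y) := ω(f x, y), one has n • (ω_f ∧ ω^{n-1}) = (tr f) • ω^n, where tr f is the (real-valued) trace of f as a ℂ-linear endomorphism. In particular, ω_f ∧ ω^{n-1} = 0 if and only if tr f = 0. -/
open scoped TensorProduct

/-- The wedge product of two real-valued alternating forms. -/
noncomputable def wedge {V : Type*} [AddCommGroup V] [Module ℝ V] {k l : ℕ}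
    (α : V [⋀^Fin k]→ₗ[ℝ] ℝ) (β : V [⋀^Fin l]→ₗ[ℝ] ℝ) :
    V [⋀^Fin (k + l)]→ₗ[ℝ] ℝ :=
  ((TensorProduct.lid ℝ ℝ).toLinearMap.compAlternatingMap
    (AlternatingMap.domCoprod α β)).domDomCongr finSumFinEquiv

/-- The `k`-th wedge power of a real-valued alternating 2-form. -/
noncomputable def wpow {V : Type*} [AddCommGroup V] [Module ℝ V]
    (ω : V [⋀^Fin 2]→ₗ[ℝ] ℝ) : (k : ℕ) → V [⋀^Fin (2 * k)]→ₗ[ℝ] ℝ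
  | 0 => (AlternatingMap.constOfIsEmpty ℝ V (Fin 0) 1).domDomCongr (finCongr (by ring))
  | k + 1 => (wedge ω (wpow ω k)).domDomCongr (finCongr (by ring))

section Aux
set_option synthInstance.maxHeartbeats 1000000
variable {V : Type*} [AddCommGroup V] [Module ℝ V]

lemma alt_two_eta (α : V [⋀^Fin 2]→ₗ[ℝ] ℝ) (u : Fin 2 → V) : α u = α ![u 0, u 1] := by
  congr 1; funext i; fin_cases i <;> rfl

lemma wedge_expand {l : ℕ} (α : V [⋀^Fin 2]→ₗ[ℝ] ℝ) (β : V [⋀^Fin l]→ₗ[ℝ] ℝ)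
    (v : Fin (2 + l) → V) :
    (2 * Nat.factorial l) • wedge α β v
      = ∑ π : Equiv.Perm (Fin (2 + l)),
          (Equiv.Perm.sign π : ℤ) •
            (α ![v (π ⟨0, by omega⟩), v (π ⟨1, by omega⟩)]
              * β (fun t => v (π (Fin.natAdd 2 t)))) := by
  have h2 := MultilinearMap.domCoprod_alternization_eq α β
  have h3 := congrArg (fun (F : V [⋀^Fin 2 ⊕ Fin l]→ₗ[ℝ] (ℝ ⊗[ℝ] ℝ)) =>
    (TensorProduct.lid ℝ ℝ) (F (fun i => v (finSumFinEquiv i)))) h2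
  simp only [Fintype.card_fin] at h3
  have hfac : (Nat.factorial 2) * (Nat.factorial l) = 2 * Nat.factorial l := by
    norm_num [Nat.factorial]
  rw [hfac] at h3
  have hL : wedge α β v = TensorProduct.lid ℝ ℝ
      (AlternatingMap.domCoprod α β (fun i => v (finSumFinEquiv i))) := rfl
  have hsm : ∀ (N : ℕ) (x : ℝ ⊗[ℝ] ℝ),
      (TensorProduct.lid ℝ ℝ) (N • x) = N • (TensorProduct.lid ℝ ℝ) x := by
    intro N x
    rw [← Nat.cast_smul_eq_nsmul ℝ, ← Nat.cast_smul_eq_nsmul ℝ, LinearEquiv.map_smul]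
  rw [AlternatingMap.smul_apply] at h3
  rw [hsm] at h3
  rw [hL, ← h3]
  rw [MultilinearMap.alternatization_apply, map_sum]
  rw [← (Equiv.permCongr finSumFinEquiv).sum_comp (g := fun π =>
      (Equiv.Perm.sign π : ℤ) • (α ![v (π ⟨0, by omega⟩), v (π ⟨1, by omega⟩)]
        * β (fun t => v (π (Fin.natAdd 2 t)))))]
  refine Finset.sum_congr rfl fun σ _ => ?_
  rw [Equiv.Perm.sign_permCongr]
  rw [Units.smul_def, map_zsmul]
  congr 1
  rw [MultilinearMap.domDomCongr_apply, MultilinearMap.domCoprod_apply, TensorProduct.lid_tmul]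
  rw [smul_eq_mul]
  simp only [AlternatingMap.coe_multilinearMap]
  have e0 : (finSumFinEquiv.permCongr σ) ⟨0, by omega⟩
      = finSumFinEquiv (σ (Sum.inl 0)) := by
    simp only [Equiv.permCongr_apply]
    rw [show ((⟨0, by omega⟩ : Fin (2+l))) = Fin.castAdd l 0 from rfl,
      finSumFinEquiv_symm_apply_castAdd]
  have e1 : (finSumFinEquiv.permCongr σ) ⟨1, by omega⟩
      = finSumFinEquiv (σ (Sum.inl 1)) := by
    simp only [Equiv.permCongr_apply]
    rw [show ((⟨1, by omega⟩ : Fin (2+l))) = Fin.castAdd l 1 from rfl,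
      finSumFinEquiv_symm_apply_castAdd]
  congr 1
  · rw [alt_two_eta α (fun i : Fin 2 => v (finSumFinEquiv (σ (Sum.inl i)))), e0, e1]
  · congr 1
    funext t
    simp only [Equiv.permCongr_apply]
    rw [show (Fin.natAdd 2 t : Fin (2+l)) = finSumFinEquiv (Sum.inr t) from rfl,
      Equiv.symm_apply_apply]
lemma perm_fix_inl {l : ℕ} (σ : Equiv.Perm (Fin 2 ⊕ Fin l))
    (h0 : σ (Sum.inl 0) = Sum.inl 0) (h1 : σ (Sum.inl 1) = Sum.inl 1) :
    ∃ τ : Equiv.Perm (Fin l), σ = Equiv.sumCongr (Equiv.refl (Fin 2)) τ := by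
  have hl : ∀ i : Fin 2, σ (Sum.inl i) = Sum.inl i := by
    intro i; fin_cases i; exacts [h0, h1]
  have hl' : ∀ i : Fin 2, σ⁻¹ (Sum.inl i) = Sum.inl i := by
    intro i; rw [Equiv.Perm.inv_eq_iff_eq]; exact (hl i).symm
  have key : ∀ (δ : Equiv.Perm (Fin 2 ⊕ Fin l)), (∀ i : Fin 2, δ (Sum.inl i) = Sum.inl i) →
      ∀ t : Fin l, ∃ u, δ (Sum.inr t) = Sum.inr u := by
    intro δ hδ t
    cases hs : δ (Sum.inr t) with
    | inl i =>
      exfalso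
      have : δ (Sum.inl i) = δ (Sum.inr t) := by rw [hs, hδ]
      exact absurd (δ.injective this) (by simp)
    | inr u => exact ⟨u, rfl⟩
  choose F hF using key σ hl
  choose G hG using key σ⁻¹ hl'
  refine ⟨⟨F, G, ?_, ?_⟩, ?_⟩
  · intro t
    have := hG (F t)
    rw [← hF t, ← Equiv.Perm.mul_apply, inv_mul_cancel, Equiv.Perm.one_apply] at this
    exact (Sum.inr_injective this).symm
  · intro t
    have := hF (G t)
    rw [← hG t, ← Equiv.Perm.mul_apply, mul_inv_cancel, Equiv.Perm.one_apply] at this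
    exact (Sum.inr_injective this).symm
  · ext x
    cases x with
    | inl i => simp [hl i]
    | inr t => simp [hF t]

/-- the summand in `wedge_expand` -/
private def wsummand {l : ℕ} (α : V [⋀^Fin 2]→ₗ[ℝ] ℝ) (β : V [⋀^Fin l]→ₗ[ℝ] ℝ)
    (v : Fin (2 + l) → V) (π : Equiv.Perm (Fin (2 + l))) : ℝ :=
  (Equiv.Perm.sign π : ℤ) •
    (α ![v (π ⟨0, by omega⟩), v (π ⟨1, by omega⟩)] * β (fun t => v (π (Fin.natAdd 2 t))))

private def emb {l : ℕ} (τ : Equiv.Perm (Fin l)) : Equiv.Perm (Fin (2 + l)) :=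
  (finSumFinEquiv.permCongr (Equiv.sumCongr (Equiv.refl (Fin 2)) τ))

lemma emb_x0 {l : ℕ} (τ : Equiv.Perm (Fin l)) : (emb τ) ⟨0, by omega⟩ = ⟨0, by omega⟩ := by
  simp only [emb, Equiv.permCongr_apply]
  rw [show ((⟨0, by omega⟩ : Fin (2+l))) = Fin.castAdd l 0 from rfl,
    finSumFinEquiv_symm_apply_castAdd]
  rfl

lemma emb_x1 {l : ℕ} (τ : Equiv.Perm (Fin l)) : (emb τ) ⟨1, by omega⟩ = ⟨1, by omega⟩ := by
  simp only [emb, Equiv.permCongr_apply]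
  rw [show ((⟨1, by omega⟩ : Fin (2+l))) = Fin.castAdd l 1 from rfl,
    finSumFinEquiv_symm_apply_castAdd]
  rfl

lemma emb_natAdd {l : ℕ} (τ : Equiv.Perm (Fin l)) (t : Fin l) :
    (emb τ) (Fin.natAdd 2 t) = Fin.natAdd 2 (τ t) := by
  simp only [emb, Equiv.permCongr_apply]
  rw [show (Fin.natAdd 2 t : Fin (2+l)) = finSumFinEquiv (Sum.inr t) from rfl,
    Equiv.symm_apply_apply]
  rfl

lemma emb_sign {l : ℕ} (τ : Equiv.Perm (Fin l)) :
    Equiv.Perm.sign (emb τ) = Equiv.Perm.sign τ := by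
  simp [emb, Equiv.Perm.sign_permCongr, Equiv.Perm.sign_sumCongr]

lemma emb_inj {l : ℕ} : Function.Injective (emb (l := l)) := by
  intro a b h
  refine Equiv.ext fun t => ?_
  have h2 := congrArg (fun (p : Equiv.Perm (Fin (2+l))) => p (Fin.natAdd 2 t)) h
  simp only [emb_natAdd] at h2
  have h3 := congrArg Fin.val h2
  simp only [Fin.coe_natAdd] at h3
  exact Fin.ext (by omega)

lemma fiber_sum {l : ℕ} (α : V [⋀^Fin 2]→ₗ[ℝ] ℝ) (β : V [⋀^Fin l]→ₗ[ℝ] ℝ)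
    (v : Fin (2 + l) → V) (ρ : Equiv.Perm (Fin (2 + l))) :
    ∑ π ∈ Finset.univ.filter (fun π : Equiv.Perm (Fin (2+l)) =>
        π ⟨0, by omega⟩ = ρ ⟨0, by omega⟩ ∧ π ⟨1, by omega⟩ = ρ ⟨1, by omega⟩),
      wsummand α β v π
    = (Nat.factorial l) • ((Equiv.Perm.sign ρ : ℤ) •
        (α ![v (ρ ⟨0, by omega⟩), v (ρ ⟨1, by omega⟩)]
          * β (fun t => v (ρ (Fin.natAdd 2 t))))) := by
  have himg : Finset.univ.filter (fun π : Equiv.Perm (Fin (2+l)) =>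
        π ⟨0, by omega⟩ = ρ ⟨0, by omega⟩ ∧ π ⟨1, by omega⟩ = ρ ⟨1, by omega⟩)
      = Finset.image (fun τ : Equiv.Perm (Fin l) => ρ * emb τ) Finset.univ := by
    ext π
    simp only [Finset.mem_filter, Finset.mem_univ, true_and, Finset.mem_image]
    constructor
    · rintro ⟨hπ0, hπ1⟩
      set σ := (Equiv.permCongr finSumFinEquiv).symm (ρ⁻¹ * π) with hσ
      have hs0 : σ (Sum.inl 0) = Sum.inl 0 := by
        rw [hσ, Equiv.permCongr_symm, Equiv.permCongr_apply, Equiv.symm_symm]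
        rw [show finSumFinEquiv (Sum.inl (0 : Fin 2)) = (⟨0, by omega⟩ : Fin (2+l)) from rfl]
        rw [Equiv.Perm.mul_apply, hπ0, ← Equiv.Perm.mul_apply, inv_mul_cancel, Equiv.Perm.one_apply]
        rw [show ((⟨0, by omega⟩ : Fin (2+l))) = Fin.castAdd l 0 from rfl,
          finSumFinEquiv_symm_apply_castAdd]
      have hs1 : σ (Sum.inl 1) = Sum.inl 1 := by
        rw [hσ, Equiv.permCongr_symm, Equiv.permCongr_apply, Equiv.symm_symm]
        rw [show finSumFinEquiv (Sum.inl (1 : Fin 2)) = (⟨1, by omega⟩ : Fin (2+l)) from rfl]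
        rw [Equiv.Perm.mul_apply, hπ1, ← Equiv.Perm.mul_apply, inv_mul_cancel, Equiv.Perm.one_apply]
        rw [show ((⟨1, by omega⟩ : Fin (2+l))) = Fin.castAdd l 1 from rfl,
          finSumFinEquiv_symm_apply_castAdd]
      obtain ⟨τ, hτ⟩ := perm_fix_inl σ hs0 hs1
      refine ⟨τ, ?_⟩
      have : emb τ = ρ⁻¹ * π := by
        rw [emb, ← hτ, hσ, Equiv.apply_symm_apply]
      rw [this, mul_inv_cancel_left]
    · rintro ⟨τ, rfl⟩
      constructor
      · rw [Equiv.Perm.mul_apply, emb_x0]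
      · rw [Equiv.Perm.mul_apply, emb_x1]
  rw [himg, Finset.sum_image (by
    intro a _ b _ h
    exact emb_inj (mul_left_cancel h))]
  have hterm : ∀ τ : Equiv.Perm (Fin l), wsummand α β v (ρ * emb τ)
      = (Equiv.Perm.sign ρ : ℤ) •
        (α ![v (ρ ⟨0, by omega⟩), v (ρ ⟨1, by omega⟩)]
          * β (fun t => v (ρ (Fin.natAdd 2 t)))) := by
    intro τ
    unfold wsummand
    have ha : ∀ (h0 : (0:ℕ) < 2 + l), (ρ * emb τ) ⟨0, h0⟩ = ρ ⟨0, h0⟩ := by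
      intro h0; rw [Equiv.Perm.mul_apply, emb_x0]
    have hb : ∀ (h1 : (1:ℕ) < 2 + l), (ρ * emb τ) ⟨1, h1⟩ = ρ ⟨1, h1⟩ := by
      intro h1; rw [Equiv.Perm.mul_apply, emb_x1]
    rw [ha, hb]
    have hβ : β (fun t => v ((ρ * emb τ) (Fin.natAdd 2 t)))
        = (Equiv.Perm.sign τ : ℤ) • β (fun t => v (ρ (Fin.natAdd 2 t))) := by
      have : (fun t => v ((ρ * emb τ) (Fin.natAdd 2 t)))
          = (fun t => v (ρ (Fin.natAdd 2 t))) ∘ τ := by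
        funext t
        simp only [Function.comp_apply, Equiv.Perm.mul_apply, emb_natAdd]
      rw [this, AlternatingMap.map_perm, Units.smul_def]
    rw [hβ, map_mul, emb_sign]
    have hsqz : ((Equiv.Perm.sign τ : ℤ) * (Equiv.Perm.sign τ : ℤ)) = 1 := by
      rw [← Units.val_mul, Int.units_mul_self]; rfl
    have hsq : ((Equiv.Perm.sign τ : ℤ) : ℝ) * ((Equiv.Perm.sign τ : ℤ) : ℝ) = 1 := by
      exact_mod_cast congrArg (fun z : ℤ => (z : ℝ)) hsqz
    simp only [zsmul_eq_mul, Units.val_mul, Int.cast_mul]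
    set s1 := ((Equiv.Perm.sign ρ : ℤ) : ℝ)
    set s2 := ((Equiv.Perm.sign τ : ℤ) : ℝ)
    set A := α ![v (ρ ⟨0, by omega⟩), v (ρ ⟨1, by omega⟩)]
    set B := β (fun t => v (ρ (Fin.natAdd 2 t)))
    linear_combination (s1 * A * B) * hsq
  rw [Finset.sum_congr rfl (fun τ _ => hterm τ), Finset.sum_const, Finset.card_univ,
    Fintype.card_perm, Fintype.card_fin]

def pa {k : ℕ} (r : Fin (k+1)) : Fin (2+2*k) := ⟨2*r.val, by have := r.isLt; omega⟩
def pb {k : ℕ} (r : Fin (k+1)) : Fin (2+2*k) := ⟨2*r.val+1, by have := r.isLt; omega⟩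
def res {k : ℕ} (r : Fin (k+1)) (t : Fin (2*k)) : Fin (2+2*k) :=
  if t.val + 2 = 2*r.val then ⟨0, by omega⟩
  else if t.val + 2 = 2*r.val + 1 then ⟨1, by omega⟩
  else ⟨t.val+2, by have := t.isLt; omega⟩

def rho {k : ℕ} (r : Fin (k+1)) : Equiv.Perm (Fin (2+2*k)) :=
  Equiv.swap ⟨1, by omega⟩ (pb r) * Equiv.swap ⟨0, by omega⟩ (pa r)

lemma pa_ne_x1 {k : ℕ} (r : Fin (k+1)) : pa r ≠ ⟨1, by omega⟩ := by
  simp only [pa, ne_eq, Fin.mk.injEq]; omega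
lemma pa_ne_pb {k : ℕ} (r s : Fin (k+1)) : pa r ≠ pb s := by
  simp only [pa, pb, ne_eq, Fin.mk.injEq]; omega

lemma rho_x0 {k : ℕ} (r : Fin (k+1)) : rho r ⟨0, by omega⟩ = pa r := by
  rw [rho, Equiv.Perm.mul_apply, Equiv.swap_apply_left,
    Equiv.swap_apply_of_ne_of_ne (pa_ne_x1 r) (pa_ne_pb r r)]

lemma rho_x1 {k : ℕ} (r : Fin (k+1)) : rho r ⟨1, by omega⟩ = pb r := by
  rw [rho, Equiv.Perm.mul_apply,
    Equiv.swap_apply_of_ne_of_ne (by simp [Fin.ext_iff]) (fun h => (pa_ne_x1 r) h.symm),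
    Equiv.swap_apply_left]

lemma rho_natAdd {k : ℕ} (r : Fin (k+1)) (t : Fin (2*k)) :
    rho r (Fin.natAdd 2 t) = res r t := by
  have ht := t.isLt
  have hr := r.isLt
  rw [rho, Equiv.Perm.mul_apply]
  by_cases h1 : t.val + 2 = 2*r.val
  · have hupa : (Fin.natAdd 2 t : Fin (2+2*k)) = pa r := by
      simp only [Fin.ext_iff, Fin.coe_natAdd, pa, Fin.val_mk]; omega
    have s1 : Equiv.swap ⟨0, by omega⟩ (pa r) (Fin.natAdd 2 t : Fin (2+2*k))
        = ⟨0, by omega⟩ := by rw [hupa, Equiv.swap_apply_right]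
    have s2 : Equiv.swap (⟨1, by omega⟩ : Fin (2+2*k)) (pb r) ⟨0, by omega⟩
        = ⟨0, by omega⟩ :=
      Equiv.swap_apply_of_ne_of_ne (by simp only [ne_eq, Fin.mk.injEq]; omega)
        (by simp only [pb, ne_eq, Fin.mk.injEq]; omega)
    rw [s1, s2, res, if_pos h1]
  · by_cases h2 : t.val + 2 = 2*r.val + 1
    · have hupb : (Fin.natAdd 2 t : Fin (2+2*k)) = pb r := by
        simp only [Fin.ext_iff, Fin.coe_natAdd, pb, Fin.val_mk]; omega
      have s1 : Equiv.swap ⟨0, by omega⟩ (pa r) (Fin.natAdd 2 t : Fin (2+2*k))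
          = Fin.natAdd 2 t :=
        Equiv.swap_apply_of_ne_of_ne
          (by simp only [ne_eq, Fin.ext_iff, Fin.coe_natAdd, Fin.val_mk]; omega)
          (by simp only [pa, ne_eq, Fin.ext_iff, Fin.coe_natAdd, Fin.val_mk]; omega)
      have s2 : Equiv.swap (⟨1, by omega⟩ : Fin (2+2*k)) (pb r) (Fin.natAdd 2 t)
          = ⟨1, by omega⟩ := by rw [hupb, Equiv.swap_apply_right]
      rw [s1, s2, res, if_neg h1, if_pos h2]
    · have s1 : Equiv.swap ⟨0, by omega⟩ (pa r) (Fin.natAdd 2 t : Fin (2+2*k))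
          = Fin.natAdd 2 t :=
        Equiv.swap_apply_of_ne_of_ne
          (by simp only [ne_eq, Fin.ext_iff, Fin.coe_natAdd, Fin.val_mk]; omega)
          (by simp only [pa, ne_eq, Fin.ext_iff, Fin.coe_natAdd, Fin.val_mk]; omega)
      have s2 : Equiv.swap (⟨1, by omega⟩ : Fin (2+2*k)) (pb r) (Fin.natAdd 2 t)
          = Fin.natAdd 2 t :=
        Equiv.swap_apply_of_ne_of_ne
          (by simp only [ne_eq, Fin.ext_iff, Fin.coe_natAdd, Fin.val_mk]; omega)
          (by simp only [pb, ne_eq, Fin.ext_iff, Fin.coe_natAdd, Fin.val_mk]; omega)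
      rw [s1, s2, res, if_neg h1, if_neg h2]
      exact Fin.ext (by simp only [Fin.coe_natAdd, Fin.val_mk]; omega)

lemma rho_sign {k : ℕ} (r : Fin (k+1)) : Equiv.Perm.sign (rho r) = 1 := by
  rcases Nat.eq_zero_or_pos r.val with h | h
  · have hpa : pa r = ⟨0, by omega⟩ := by simp [pa, Fin.ext_iff, h]
    have hpb : pb r = ⟨1, by omega⟩ := by simp [pb, Fin.ext_iff, h]
    rw [rho, hpa, hpb, Equiv.swap_self, Equiv.swap_self]
    simp
  · rw [rho, map_mul,
      Equiv.Perm.sign_swap (by simp only [pb, ne_eq, Fin.mk.injEq]; omega),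
      Equiv.Perm.sign_swap (by simp only [pa, ne_eq, Fin.mk.injEq]; omega)]
    simp

lemma alt2_antisym (α : V [⋀^Fin 2]→ₗ[ℝ] ℝ) (x y : V) : α ![y, x] = - α ![x, y] := by
  have h := AlternatingMap.map_swap α ![x, y] (by decide : (0 : Fin 2) ≠ 1)
  have he : (![x, y] ∘ (Equiv.swap (0 : Fin 2) 1)) = ![y, x] := by
    funext i; fin_cases i <;> rfl
  rw [he] at h
  exact h

lemma wedge_eval {k : ℕ} (α : V [⋀^Fin 2]→ₗ[ℝ] ℝ) (β : V [⋀^Fin (2*k)]→ₗ[ℝ] ℝ)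
    (v : Fin (2+2*k) → V)
    (hv : ∀ a b : Fin (2+2*k), α ![v a, v b] ≠ 0 →
      ∃ r : Fin (k+1), (a.val = 2*r.val ∧ b.val = 2*r.val+1) ∨
        (a.val = 2*r.val+1 ∧ b.val = 2*r.val)) :
    wedge α β v = ∑ r : Fin (k+1), α ![v (pa r), v (pb r)] * β (fun t => v (res r t)) := by
  classical
  have key : (2 * Nat.factorial (2*k)) • wedge α β v
      = ∑ π : Equiv.Perm (Fin (2+2*k)), wsummand α β v π := wedge_expand α β v
  set x0 : Fin (2+2*k) := ⟨0, by omega⟩ with hx0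
  set x1 : Fin (2+2*k) := ⟨1, by omega⟩ with hx1
  have hfib := Finset.sum_fiberwise_of_maps_to
    (s := (Finset.univ : Finset (Equiv.Perm (Fin (2+2*k)))))
    (t := (Finset.univ : Finset (Fin (2+2*k) × Fin (2+2*k))))
    (g := fun π : Equiv.Perm (Fin (2+2*k)) => (π x0, π x1))
    (fun π _ => Finset.mem_univ _) (wsummand α β v)
  rw [← hfib] at key
  set good : Finset (Fin (2+2*k) × Fin (2+2*k)) :=
    (Finset.univ.image fun r : Fin (k+1) => (pa r, pb r)) ∪
    (Finset.univ.image fun r : Fin (k+1) => (pb r, pa r)) with hgood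
  have hzero : ∀ p ∈ (Finset.univ : Finset (Fin (2+2*k) × Fin (2+2*k))), p ∉ good →
      (∑ π ∈ Finset.univ.filter
        (fun π : Equiv.Perm (Fin (2+2*k)) => (π x0, π x1) = p), wsummand α β v π) = 0 := by
    rintro ⟨a, b⟩ _ hp
    apply Finset.sum_eq_zero
    intro π hπ
    simp only [Finset.mem_filter, Prod.mk.injEq] at hπ
    obtain ⟨-, h0, h1⟩ := hπ
    have hab : α ![v a, v b] = 0 := by
      by_contra hne
      obtain ⟨r, hr | hr⟩ := hv a b hne
      · exact hp (Finset.mem_union_left _ (Finset.mem_image.2 ⟨r, Finset.mem_univ _,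
          by simp [pa, pb, Prod.ext_iff, Fin.ext_iff, hr.1, hr.2]⟩))
      · exact hp (Finset.mem_union_right _ (Finset.mem_image.2 ⟨r, Finset.mem_univ _,
          by simp [pa, pb, Prod.ext_iff, Fin.ext_iff, hr.1, hr.2]⟩))
    unfold wsummand
    rw [h0, h1, hab]
    simp
  rw [← Finset.sum_subset (Finset.subset_univ good) hzero] at key
  have hdisj : Disjoint (Finset.univ.image fun r : Fin (k+1) => (pa r, pb r))
      (Finset.univ.image fun r : Fin (k+1) => (pb r, pa r)) := by
    rw [Finset.disjoint_left]
    rintro ⟨a, b⟩ ha hb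
    simp only [Finset.mem_image, Finset.mem_univ, true_and, Prod.mk.injEq] at ha hb
    obtain ⟨r, hr1, hr2⟩ := ha
    obtain ⟨s, hs1, hs2⟩ := hb
    rw [← hr1] at hs1
    exact pa_ne_pb r s hs1.symm
  rw [Finset.sum_union hdisj] at key
  have hinj1 : Set.InjOn (fun r : Fin (k+1) => (pa r, pb r)) (Finset.univ : Finset (Fin (k+1))) := by
    intro a _ b _ h
    simp only [Prod.mk.injEq, pa, pb, Fin.mk.injEq] at h
    exact Fin.ext (by omega)
  have hinj2 : Set.InjOn (fun r : Fin (k+1) => (pb r, pa r)) (Finset.univ : Finset (Fin (k+1))) := by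
    intro a _ b _ h
    simp only [Prod.mk.injEq, pa, pb, Fin.mk.injEq] at h
    exact Fin.ext (by omega)
  rw [Finset.sum_image hinj1, Finset.sum_image hinj2] at key
  have hterm1 : ∀ r : Fin (k+1),
      (∑ π ∈ Finset.univ.filter
        (fun π : Equiv.Perm (Fin (2+2*k)) => (π x0, π x1) = (pa r, pb r)), wsummand α β v π)
      = (Nat.factorial (2*k)) • (α ![v (pa r), v (pb r)] * β (fun t => v (res r t))) := by
    intro r
    have hfc : (Finset.univ.filter
        (fun π : Equiv.Perm (Fin (2+2*k)) => (π x0, π x1) = (pa r, pb r)))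
        = (Finset.univ.filter (fun π : Equiv.Perm (Fin (2+2*k)) =>
            π x0 = rho r x0 ∧ π x1 = rho r x1)) := by
      apply Finset.filter_congr
      intro π _
      rw [Prod.mk.injEq, rho_x0, rho_x1]
    rw [hfc, fiber_sum α β v (rho r)]
    rw [rho_sign, rho_x0, rho_x1]
    have hone : (((1 : ℤˣ) : ℤ) • (α ![v (pa r), v (pb r)]
        * β (fun t => v (rho r (Fin.natAdd 2 t)))) : ℝ)
        = α ![v (pa r), v (pb r)] * β (fun t => v (res r t)) := by
      rw [Units.val_one, one_smul]
      have harg : (fun t => v ((rho r) (Fin.natAdd 2 t))) = fun t => v (res r t) :=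
        funext fun t => by rw [rho_natAdd]
      rw [harg]
    rw [hone]
  have hterm2 : ∀ r : Fin (k+1),
      (∑ π ∈ Finset.univ.filter
        (fun π : Equiv.Perm (Fin (2+2*k)) => (π x0, π x1) = (pb r, pa r)), wsummand α β v π)
      = (Nat.factorial (2*k)) • (α ![v (pa r), v (pb r)] * β (fun t => v (res r t))) := by
    intro r
    set ρ' : Equiv.Perm (Fin (2+2*k)) := rho r * Equiv.swap x0 x1 with hρ'
    have hx01 : x0 ≠ x1 := by
      rw [hx0, hx1]; simp only [ne_eq, Fin.mk.injEq]; omega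
    have hρ'0 : ρ' x0 = pb r := by
      rw [hρ', Equiv.Perm.mul_apply, Equiv.swap_apply_left, rho_x1]
    have hρ'1 : ρ' x1 = pa r := by
      rw [hρ', Equiv.Perm.mul_apply, Equiv.swap_apply_right, rho_x0]
    have hρ'n : ∀ t : Fin (2*k), ρ' (Fin.natAdd 2 t) = res r t := by
      intro t
      rw [hρ', Equiv.Perm.mul_apply,
        Equiv.swap_apply_of_ne_of_ne
          (by rw [hx0]; simp only [ne_eq, Fin.ext_iff, Fin.coe_natAdd, Fin.val_mk]; omega)
          (by rw [hx1]; simp only [ne_eq, Fin.ext_iff, Fin.coe_natAdd, Fin.val_mk]; omega),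
        rho_natAdd]
    have hsgn : Equiv.Perm.sign ρ' = -1 := by
      rw [hρ', map_mul, rho_sign, Equiv.Perm.sign_swap hx01, one_mul]
    have hfc : (Finset.univ.filter
        (fun π : Equiv.Perm (Fin (2+2*k)) => (π x0, π x1) = (pb r, pa r)))
        = (Finset.univ.filter (fun π : Equiv.Perm (Fin (2+2*k)) =>
            π x0 = ρ' x0 ∧ π x1 = ρ' x1)) := by
      apply Finset.filter_congr
      intro π _
      rw [Prod.mk.injEq, hρ'0, hρ'1]
    rw [hfc, fiber_sum α β v ρ', hsgn, hρ'0, hρ'1]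
    congr 1
    have hβeq : β (fun t => v (ρ' (Fin.natAdd 2 t))) = β (fun t => v (res r t)) := by
      have harg : (fun t => v (ρ' (Fin.natAdd 2 t))) = fun t => v (res r t) :=
        funext fun t => by rw [hρ'n]
      rw [harg]
    rw [hβeq, alt2_antisym α (v (pa r)) (v (pb r))]
    have : (((-1 : ℤˣ) : ℤ) : ℝ) = -1 := by norm_num
    rw [zsmul_eq_mul, this]
    ring
  rw [Finset.sum_congr rfl (fun r _ => hterm1 r),
    Finset.sum_congr rfl (fun r _ => hterm2 r)] at key
  have hN : ((2 * Nat.factorial (2*k) : ℕ) : ℝ) ≠ 0 := by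
    have := Nat.factorial_pos (2*k)
    positivity
  apply mul_left_cancel₀ hN
  rw [← nsmul_eq_mul, key, ← Finset.sum_add_distrib, Finset.mul_sum]
  refine Finset.sum_congr rfl fun r _ => ?_
  rw [← nsmul_eq_mul, ← two_nsmul, ← mul_nsmul']
end Aux


section IP
variable {V : Type*} [NormedAddCommGroup V] [InnerProductSpace ℂ V]

/-- the real tuple of basis vectors selected by `h` -/
noncomputable def Dk {n : ℕ} (e : OrthonormalBasis (Fin n) ℂ V) {k : ℕ}
    (h : Fin k → Fin n) : Fin (2*k) → V :=
  fun t => (if t.val % 2 = 1 then Complex.I else (1:ℂ)) •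
    e (h ⟨t.val / 2, by have := t.isLt; omega⟩)

lemma omega_scaled {n : ℕ} (e : OrthonormalBasis (Fin n) ℂ V)
    (ω : V [⋀^Fin 2]→ₗ[ℝ] ℝ)
    (hω : ∀ u v : V, ω ![u, v] = (inner ℂ (Complex.I • u) v : ℂ).re)
    (i j : Fin n) (p q : Prop) [Decidable p] [Decidable q] :
    ω ![(if p then Complex.I else (1:ℂ)) • e i, (if q then Complex.I else (1:ℂ)) • e j]
      = if i = j then (if p then (if q then 0 else -1) else (if q then 1 else 0)) else 0 := by
  rw [hω, smul_smul, inner_smul_left, inner_smul_right,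
    orthonormal_iff_ite.mp e.orthonormal]
  split_ifs <;> simp_all <;> norm_num

lemma wpow_zero_apply (ω : V [⋀^Fin 2]→ₗ[ℝ] ℝ) (v : Fin (2*0) → V) :
    wpow ω 0 v = 1 := by
  simp [wpow]

lemma wpow_succ_apply (ω : V [⋀^Fin 2]→ₗ[ℝ] ℝ) (k : ℕ) (v : Fin (2*(k+1)) → V) :
    wpow ω (k+1) v = wedge ω (wpow ω k) (fun i => v (finCongr (by ring) i)) := by
  rw [wpow]
  rfl

/-- pair-skipping reindex -/
def gm {k : ℕ} (r : Fin (k+1)) (s : Fin k) : Fin (k+1) :=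
  if s.val + 1 = r.val then ⟨0, by omega⟩ else ⟨s.val + 1, by have := s.isLt; omega⟩

lemma gm_inj {k : ℕ} (r : Fin (k+1)) : Function.Injective (gm r) := by
  intro a b h
  unfold gm at h
  split_ifs at h <;> simp_all [Fin.ext_iff] <;> omega


lemma ite_smul_congr {V : Type*} [NormedAddCommGroup V] [InnerProductSpace ℂ V]
    {n : ℕ} (e : OrthonormalBasis (Fin n) ℂ V) (c1 c2 : Prop) [Decidable c1] [Decidable c2]
    (hc : c1 ↔ c2) {i j : Fin n} (hij : i = j) :
    (if c1 then Complex.I else (1:ℂ)) • e i = (if c2 then Complex.I else (1:ℂ)) • e j := by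
  subst hij
  congr 1
  exact if_congr hc rfl rfl

lemma wpow_eval {V : Type*} [NormedAddCommGroup V] [InnerProductSpace ℂ V]
    {n : ℕ} (e : OrthonormalBasis (Fin n) ℂ V)
    (ω : V [⋀^Fin 2]→ₗ[ℝ] ℝ)
    (hω : ∀ u v : V, ω ![u, v] = (inner ℂ (Complex.I • u) v : ℂ).re) :
    ∀ (k : ℕ) (h : Fin k → Fin n), Function.Injective h →
      wpow ω k (Dk e h) = Nat.factorial k := by
  intro k
  induction k with
  | zero => intro h _; rw [wpow_zero_apply]; norm_num
  | succ k ih =>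
    intro h hinj
    rw [wpow_succ_apply]
    set v : Fin (2+2*k) → V := fun i => Dk e h (finCongr (by ring) i) with hvdef
    have hva : ∀ i : Fin (2+2*k), v i
        = (if i.val % 2 = 1 then Complex.I else (1:ℂ)) •
            e (h ⟨i.val / 2, by have := i.isLt; omega⟩) := fun i => rfl
    have hv : ∀ a b : Fin (2+2*k), ω ![v a, v b] ≠ 0 →
        ∃ r : Fin (k+1), (a.val = 2*r.val ∧ b.val = 2*r.val+1) ∨
          (a.val = 2*r.val+1 ∧ b.val = 2*r.val) := by
      intro a b hne
      rw [hva a, hva b, omega_scaled e ω hω] at hne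
      have hab : (⟨a.val / 2, by have := a.isLt; omega⟩ : Fin (k+1))
          = ⟨b.val / 2, by have := b.isLt; omega⟩ ∧
          ((¬(a.val % 2 = 1) ∧ b.val % 2 = 1) ∨ ((a.val % 2 = 1) ∧ ¬(b.val % 2 = 1))) := by
        by_contra hcon
        push_neg at hcon
        rcases Decidable.em ((⟨a.val / 2, by have := a.isLt; omega⟩ : Fin (k+1))
            = ⟨b.val / 2, by have := b.isLt; omega⟩) with heq | hne2
        · have := hcon heq
          apply hne
          rw [if_pos (congrArg h heq)]
          rcases Decidable.em (a.val % 2 = 1) with h1 | h1 <;>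
            rcases Decidable.em (b.val % 2 = 1) with h2 | h2 <;>
              simp [h1, h2] at this ⊢ <;> tauto
        · apply hne
          rw [if_neg (fun hh => hne2 (hinj hh))]
      obtain ⟨heq, hpar⟩ := hab
      have heqv : a.val / 2 = b.val / 2 := by
        have := congrArg Fin.val heq
        simpa using this
      refine ⟨⟨a.val/2, by have := a.isLt; omega⟩, ?_⟩
      have ha := a.isLt
      have hb := b.isLt
      rcases hpar with ⟨h1, h2⟩ | ⟨h1, h2⟩
      · left; constructor <;> simp <;> omega
      · right; constructor <;> simp <;> omega
    rw [wedge_eval ω (wpow ω k) v hv]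
    have hterm : ∀ r : Fin (k+1),
        ω ![v (pa r), v (pb r)] * (wpow ω k) (fun t => v (res r t))
          = Nat.factorial k := by
      intro r
      have hr := r.isLt
      have hA : ω ![v (pa r), v (pb r)] = 1 := by
        rw [hva, hva, omega_scaled e ω hω]
        have hidx : (⟨(pa r).val / 2, by have := (pa r).isLt; omega⟩ : Fin (k+1))
            = ⟨(pb r).val / 2, by have := (pb r).isLt; omega⟩ := by
          simp only [pa, pb, Fin.mk.injEq, Fin.val_mk]
          omega
        rw [if_pos (congrArg h hidx),
          if_neg (by simp only [pa, Fin.val_mk]; omega),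
          if_pos (by simp only [pb, Fin.val_mk]; omega)]
      have hB : (fun t => v (res r t)) = Dk e (fun s => h (gm r s)) := by
        funext t
        have ht := t.isLt
        rw [hva (res r t)]
        show _ = (if t.val % 2 = 1 then Complex.I else (1:ℂ)) •
          e ((fun s => h (gm r s)) ⟨t.val / 2, by omega⟩)
        by_cases h1 : t.val + 2 = 2*r.val
        · have hres : (res r t).val = 0 := by
            simp only [res, if_pos h1, Fin.val_mk]
          refine ite_smul_congr e _ _ (by rw [hres]; omega) ?_
          apply congrArg h
          apply Fin.ext
          simp only [gm, apply_ite Fin.val, Fin.val_mk, hres]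
          split_ifs <;> omega
        · by_cases h2 : t.val + 2 = 2*r.val + 1
          · have hres : (res r t).val = 1 := by
              simp only [res, if_neg h1, if_pos h2, Fin.val_mk]
            refine ite_smul_congr e _ _ (by rw [hres]; omega) ?_
            apply congrArg h
            apply Fin.ext
            simp only [gm, apply_ite Fin.val, Fin.val_mk, hres]
            split_ifs <;> omega
          · have hres : (res r t).val = t.val + 2 := by
              simp only [res, if_neg h1, if_neg h2, Fin.val_mk]
            refine ite_smul_congr e _ _ (by rw [hres]; omega) ?_
            apply congrArg h
            apply Fin.ext
            simp only [gm, apply_ite Fin.val, Fin.val_mk, hres]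
            split_ifs <;> omega
      rw [hA, hB, ih (fun s => h (gm r s)) (fun a b hab => gm_inj r (hinj hab))]
      rw [one_mul]
    rw [Finset.sum_congr rfl (fun r _ => hterm r), Finset.sum_const, Finset.card_univ,
      Fintype.card_fin, nsmul_eq_mul]
    rw [Nat.factorial_succ]
    push_cast
    ring


lemma pairs_of_ne {V : Type*} [NormedAddCommGroup V] [InnerProductSpace ℂ V]
    {n : ℕ} (e : OrthonormalBasis (Fin n) ℂ V)
    (ω : V [⋀^Fin 2]→ₗ[ℝ] ℝ)
    (hω : ∀ u v : V, ω ![u, v] = (inner ℂ (Complex.I • u) v : ℂ).re)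
    {k : ℕ} (h : Fin (k+1) → Fin n) (hinj : Function.Injective h)
    (v : Fin (2+2*k) → V)
    (hva : ∀ i : Fin (2+2*k), v i = (if i.val % 2 = 1 then Complex.I else (1:ℂ)) •
      e (h ⟨i.val / 2, by have := i.isLt; omega⟩)) :
    ∀ a b : Fin (2+2*k), ω ![v a, v b] ≠ 0 →
      ∃ r : Fin (k+1), (a.val = 2*r.val ∧ b.val = 2*r.val+1) ∨
        (a.val = 2*r.val+1 ∧ b.val = 2*r.val) := by
  intro a b hne
  rw [hva a, hva b, omega_scaled e ω hω] at hne
  have hab : (⟨a.val / 2, by have := a.isLt; omega⟩ : Fin (k+1))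
      = ⟨b.val / 2, by have := b.isLt; omega⟩ ∧
      ((¬(a.val % 2 = 1) ∧ b.val % 2 = 1) ∨ ((a.val % 2 = 1) ∧ ¬(b.val % 2 = 1))) := by
    by_contra hcon
    push_neg at hcon
    rcases Decidable.em ((⟨a.val / 2, by have := a.isLt; omega⟩ : Fin (k+1))
        = ⟨b.val / 2, by have := b.isLt; omega⟩) with heq | hne2
    · have := hcon heq
      apply hne
      rw [if_pos (congrArg h heq)]
      rcases Decidable.em (a.val % 2 = 1) with h1 | h1 <;>
        rcases Decidable.em (b.val % 2 = 1) with h2 | h2 <;>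
          simp [h1, h2] at this ⊢ <;> tauto
    · apply hne
      rw [if_neg (fun hh => hne2 (hinj hh))]
  obtain ⟨heq, hpar⟩ := hab
  have heqv : a.val / 2 = b.val / 2 := by
    have := congrArg Fin.val heq
    simpa using this
  refine ⟨⟨a.val/2, by have := a.isLt; omega⟩, ?_⟩
  have ha := a.isLt
  have hb := b.isLt
  rcases hpar with ⟨h1, h2⟩ | ⟨h1, h2⟩
  · left; constructor <;> simp <;> omega
  · right; constructor <;> simp <;> omega

lemma pair_one {V : Type*} [NormedAddCommGroup V] [InnerProductSpace ℂ V]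
    {n : ℕ} (e : OrthonormalBasis (Fin n) ℂ V)
    (ω : V [⋀^Fin 2]→ₗ[ℝ] ℝ)
    (hω : ∀ u v : V, ω ![u, v] = (inner ℂ (Complex.I • u) v : ℂ).re)
    {k : ℕ} (h : Fin (k+1) → Fin n)
    (v : Fin (2+2*k) → V)
    (hva : ∀ i : Fin (2+2*k), v i = (if i.val % 2 = 1 then Complex.I else (1:ℂ)) •
      e (h ⟨i.val / 2, by have := i.isLt; omega⟩)) (r : Fin (k+1)) :
    ω ![v (pa r), v (pb r)] = 1 := by
  have hr := r.isLt
  rw [hva, hva, omega_scaled e ω hω]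
  have hidx : (⟨(pa r).val / 2, by have := (pa r).isLt; omega⟩ : Fin (k+1))
      = ⟨(pb r).val / 2, by have := (pb r).isLt; omega⟩ := by
    simp only [pa, pb, Fin.mk.injEq, Fin.val_mk]
    omega
  rw [if_pos (congrArg h hidx),
    if_neg (by simp only [pa, Fin.val_mk]; omega),
    if_pos (by simp only [pb, Fin.val_mk]; omega)]

lemma res_tuple {V : Type*} [NormedAddCommGroup V] [InnerProductSpace ℂ V]
    {n : ℕ} (e : OrthonormalBasis (Fin n) ℂ V)
    {k : ℕ} (h : Fin (k+1) → Fin n)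
    (v : Fin (2+2*k) → V)
    (hva : ∀ i : Fin (2+2*k), v i = (if i.val % 2 = 1 then Complex.I else (1:ℂ)) •
      e (h ⟨i.val / 2, by have := i.isLt; omega⟩)) (r : Fin (k+1)) :
    (fun t => v (res r t)) = Dk e (fun s => h (gm r s)) := by
  have hr := r.isLt
  funext t
  have ht := t.isLt
  rw [hva (res r t)]
  show _ = (if t.val % 2 = 1 then Complex.I else (1:ℂ)) •
    e ((fun s => h (gm r s)) ⟨t.val / 2, by omega⟩)
  by_cases h1 : t.val + 2 = 2*r.val
  · have hres : (res r t).val = 0 := by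
      simp only [res, if_pos h1, Fin.val_mk]
    refine ite_smul_congr e _ _ (by rw [hres]; omega) ?_
    apply congrArg h
    apply Fin.ext
    simp only [gm, apply_ite Fin.val, Fin.val_mk, hres]
    split_ifs <;> omega
  · by_cases h2 : t.val + 2 = 2*r.val + 1
    · have hres : (res r t).val = 1 := by
        simp only [res, if_neg h1, if_pos h2, Fin.val_mk]
      refine ite_smul_congr e _ _ (by rw [hres]; omega) ?_
      apply congrArg h
      apply Fin.ext
      simp only [gm, apply_ite Fin.val, Fin.val_mk, hres]
      split_ifs <;> omega
    · have hres : (res r t).val = t.val + 2 := by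
        simp only [res, if_neg h1, if_neg h2, Fin.val_mk]
      refine ite_smul_congr e _ _ (by rw [hres]; omega) ?_
      apply congrArg h
      apply Fin.ext
      simp only [gm, apply_ite Fin.val, Fin.val_mk, hres]
      split_ifs <;> omega

end IP

/-- For a self-adjoint endomorphism `f` of a complex inner product space of dimension
`n ≥ 1`: its trace is real, `n • (ω_f ∧ ω^{n-1}) = (tr f) • ω^n`, and in particular
`ω_f ∧ ω^{n-1} = 0` iff `tr f = 0`. -/
theorem omega_f_wedge_pow {V : Type*} [NormedAddCommGroup V] [InnerProductSpace ℂ V]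
    [FiniteDimensional ℂ V] {n : ℕ} (hn : 1 ≤ n) (hdim : Module.finrank ℂ V = n)
    (ω : V [⋀^Fin 2]→ₗ[ℝ] ℝ)
    (hω : ∀ u v : V, ω ![u, v] = (inner ℂ (Complex.I • u) v : ℂ).re)
    (f : V →ₗ[ℂ] V) (hf : ∀ x y : V, (inner ℂ (f x) y : ℂ) = inner ℂ x (f y))
    (ωf : V [⋀^Fin 2]→ₗ[ℝ] ℝ)
    (hωf : ∀ x y : V, ωf ![x, y] = (inner ℂ (Complex.I • f x) y : ℂ).re) :
    (LinearMap.trace ℂ V f).im = 0 ∧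
    (n : ℝ) • ((wedge ωf (wpow ω (n - 1))).domDomCongr
        (finCongr (by omega : 2 + 2 * (n - 1) = 2 * n)))
      = (LinearMap.trace ℂ V f).re • wpow ω n ∧
    (((wedge ωf (wpow ω (n - 1))).domDomCongr
        (finCongr (by omega : 2 + 2 * (n - 1) = 2 * n))) = 0
      ↔ LinearMap.trace ℂ V f = 0) := by
  classical
  have hT : f.IsSymmetric := fun x y => hf x y
  set e := hT.eigenvectorBasis hdim with he
  set μ := hT.eigenvalues hdim with hμ
  have heig : ∀ i, f (e i) = ((μ i : ℝ) : ℂ) • e i := fun i =>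
    hT.apply_eigenvectorBasis hdim i
  -- trace computation
  have htr : LinearMap.trace ℂ V f = ((∑ i, μ i : ℝ) : ℂ) := by
    rw [LinearMap.trace_eq_matrix_trace ℂ e.toBasis f, Matrix.trace, Complex.ofReal_sum]
    refine Finset.sum_congr rfl fun i _ => ?_
    rw [Matrix.diag_apply, LinearMap.toMatrix_apply]
    simp only [OrthonormalBasis.coe_toBasis]
    rw [heig i, map_smul, Finsupp.smul_apply]
    simp [OrthonormalBasis.coe_toBasis_repr_apply, OrthonormalBasis.repr_self,
      EuclideanSpace.single_apply]
  have him : (LinearMap.trace ℂ V f).im = 0 := by rw [htr]; simp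
  have hre : (LinearMap.trace ℂ V f).re = ∑ i, μ i := by rw [htr]; simp
  -- scaled eigenvector values of ωf
  have hscal : ∀ (x y : V) (c : ℝ), f x = (c:ℂ) • x → ωf ![x, y] = c * ω ![x, y] := by
    intro x y c hx
    rw [hωf, hω, hx, smul_comm, inner_smul_left, Complex.conj_ofReal, Complex.re_ofReal_mul]
  -- the distinguished tuple
  set D : Fin (2*n) → V := Dk e (fun i => i) with hD
  set X := (wedge ωf (wpow ω (n - 1))).domDomCongr
      (finCongr (by omega : 2 + 2 * (n - 1) = 2 * n)) with hX
  have hW : wpow ω n D = Nat.factorial n :=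
    wpow_eval e ω hω n (fun i => i) (fun a b hab => hab)
  -- evaluation of X at D
  have hXval : X D = (∑ i, μ i) * Nat.factorial (n-1) := by
    rw [hX, AlternatingMap.domDomCongr_apply]
    have hn1 : n - 1 + 1 = n := by omega
    set v : Fin (2+2*(n-1)) → V :=
      (D ∘ (finCongr (by omega : 2 + 2 * (n - 1) = 2 * n))) with hv
    set h : Fin ((n-1)+1) → Fin n := fun s => ⟨s.val, by have := s.isLt; omega⟩ with hh
    have hinj : Function.Injective h := by
      intro a b hab
      simp only [hh, Fin.mk.injEq] at hab
      exact Fin.ext hab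
    have hva : ∀ i : Fin (2+2*(n-1)), v i
        = (if i.val % 2 = 1 then Complex.I else (1:ℂ)) •
            e (h ⟨i.val / 2, by have := i.isLt; omega⟩) := fun i => rfl
    have heigv : ∀ i : Fin (2+2*(n-1)),
        f (v i) = ((μ (h ⟨i.val / 2, by have := i.isLt; omega⟩) : ℝ) : ℂ) • v i := by
      intro i
      rw [hva i, map_smul, heig, smul_comm]
    have hv2 : ∀ a b : Fin (2+2*(n-1)), ωf ![v a, v b] ≠ 0 →
        ∃ r : Fin ((n-1)+1), (a.val = 2*r.val ∧ b.val = 2*r.val+1) ∨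
          (a.val = 2*r.val+1 ∧ b.val = 2*r.val) := by
      intro a b hne
      refine pairs_of_ne e ω hω h hinj v hva a b ?_
      intro hzero
      apply hne
      rw [hscal (v a) (v b) _ (heigv a), hzero, mul_zero]
    rw [wedge_eval ωf (wpow ω (n-1)) v hv2]
    have hterm : ∀ r : Fin ((n-1)+1),
        ωf ![v (pa r), v (pb r)] * (wpow ω (n-1)) (fun t => v (res r t))
          = μ (h ⟨r.val, by have := r.isLt; omega⟩) * Nat.factorial (n-1) := by
      intro r
      have hA : ωf ![v (pa r), v (pb r)]
          = μ (h ⟨r.val, by have := r.isLt; omega⟩) := by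
        rw [hscal (v (pa r)) (v (pb r)) _ (heigv (pa r)),
          pair_one e ω hω h v hva r, mul_one]
        congr 2
        apply Fin.ext
        simp only [pa, Fin.val_mk]
        omega
      have hB : (wpow ω (n-1)) (fun t => v (res r t)) = Nat.factorial (n-1) := by
        rw [res_tuple e h v hva r]
        exact wpow_eval e ω hω (n-1) (fun s => h (gm r s))
          (fun a b hab => gm_inj r (hinj hab))
      rw [hA, hB]
    rw [Finset.sum_congr rfl (fun r _ => hterm r), ← Finset.sum_mul]
    congr 1
    refine Fintype.sum_equiv (finCongr hn1) _ _ fun r => ?_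
    congr 1
  -- basis and top-form extensionality
  have hfinr : Fintype.card (Fin (2*n)) = Module.finrank ℝ V := by
    rw [Fintype.card_fin, ← Module.finrank_mul_finrank ℝ ℂ V,
      Complex.finrank_real_complex, hdim]
  have hspan : ⊤ ≤ Submodule.span ℝ (Set.range D) := by
    rintro x -
    have hx := e.sum_repr x
    rw [← hx]
    apply Submodule.sum_mem
    intro i _
    have hsplit : (e.repr x i) • e i
        = (e.repr x i).re • e i + (e.repr x i).im • (Complex.I • e i) := by
      nth_rewrite 1 [← Complex.re_add_im (e.repr x i)]
      rw [add_smul, mul_smul, ← algebraMap_smul ℂ (e.repr x i).re (e i),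
        ← algebraMap_smul ℂ (e.repr x i).im (Complex.I • e i)]
      norm_num
    rw [hsplit]
    have hmem1 : e i ∈ Submodule.span ℝ (Set.range D) := by
      apply Submodule.subset_span
      refine ⟨⟨2*i.val, by have := i.isLt; omega⟩, ?_⟩
      rw [hD]
      show (if (2*i.val) % 2 = 1 then Complex.I else (1:ℂ)) • e _ = e i
      rw [if_neg (by omega), one_smul]
      congr 1
      apply Fin.ext
      simp only [Fin.val_mk]
      omega
    have hmem2 : Complex.I • e i ∈ Submodule.span ℝ (Set.range D) := by
      apply Submodule.subset_span
      refine ⟨⟨2*i.val+1, by have := i.isLt; omega⟩, ?_⟩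
      rw [hD]
      show (if (2*i.val+1) % 2 = 1 then Complex.I else (1:ℂ)) • e _ = Complex.I • e i
      rw [if_pos (by omega)]
      congr 1
      exact congrArg e (Fin.ext (by simp only [Fin.val_mk]; omega))
    exact add_mem (Submodule.smul_mem _ _ hmem1) (Submodule.smul_mem _ _ hmem2)
  set bV : Module.Basis (Fin (2*n)) ℝ V := basisOfTopLeSpanOfCardEqFinrank D hspan hfinr with hbV
  have hbVD : ⇑bV = D := coe_basisOfTopLeSpanOfCardEqFinrank _ _ _
  have topext : ∀ (ρ σ : V [⋀^Fin (2*n)]→ₗ[ℝ] ℝ), ρ D = σ D → ρ = σ := by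
    intro ρ σ hρσ
    rw [AlternatingMap.eq_smul_basis_det bV ρ, AlternatingMap.eq_smul_basis_det bV σ,
      hbVD, hρσ]
  have hmain : (n:ℝ) • X = (LinearMap.trace ℂ V f).re • wpow ω n := by
    apply topext
    rw [AlternatingMap.smul_apply, AlternatingMap.smul_apply, hXval, hW, hre]
    rw [smul_eq_mul, smul_eq_mul, ← Nat.mul_factorial_pred (by omega : n ≠ 0)]
    push_cast
    ring
  refine ⟨him, hmain, ?_⟩
  have hfacne : ((Nat.factorial n : ℕ) : ℝ) ≠ 0 := by
    have := Nat.factorial_pos n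
    positivity
  constructor
  · intro hXzero
    have h1 := congrArg (fun (ρ : V [⋀^Fin (2*n)]→ₗ[ℝ] ℝ) => ρ D) hmain
    simp only [hXzero, AlternatingMap.smul_apply, AlternatingMap.zero_apply, smul_zero] at h1
    rw [hW, smul_eq_mul] at h1
    have hre0 : (LinearMap.trace ℂ V f).re = 0 := by
      rcases mul_eq_zero.mp h1.symm with h | h
      · exact h
      · exact absurd h hfacne
    exact Complex.ext hre0 him
  · intro htr0
    have h0 : (n:ℝ) • X = 0 := by
      rw [hmain, htr0]
      simp
    have := congrArg (fun Y => (n:ℝ)⁻¹ • Y) h0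
    simpa [smul_smul, inv_mul_cancel₀ (show (n:ℝ) ≠ 0 by positivity)] using this
end

section
/- Let 𝔤 be a finite-dimensional real Lie algebra with Killing form B, and suppose 𝔤 = 𝔨 ⊕ 𝔭 is a direct sum of real subspaces with [𝔨,𝔨] ⊆ 𝔨, [𝔨,𝔭] ⊆ 𝔭, [𝔭,𝔭] ⊆ 𝔨, such that B is negative definite on 𝔨 and positive definite on 𝔭. If 𝔞 is a ℂ-linear subspace of 𝔭^ℂ ⊆ 𝔤^ℂ such that [X, Y] = 0 for all X, Y ∈ 𝔞, then dim_ℂ 𝔞 ≤ ½ dim_ℝ 𝔭. -/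
open scoped TensorProduct

open Module LinearMap Submodule
open scoped RealInnerProductSpace

attribute [local instance 100] LieRing.ofAssociativeRing

set_option maxHeartbeats 1600000 in
theorem carlson_toledo_aux {L : Type*} [LieRing L] [LieAlgebra ℝ L] [Module.Finite ℝ L]
    (𝔨 𝔭 : Submodule ℝ L) (hcompl : IsCompl 𝔨 𝔭)
    (hkk : ∀ x ∈ 𝔨, ∀ y ∈ 𝔨, ⁅x, y⁆ ∈ 𝔨)
    (hkp : ∀ x ∈ 𝔨, ∀ y ∈ 𝔭, ⁅x, y⁆ ∈ 𝔭)
    (hpp : ∀ x ∈ 𝔭, ∀ y ∈ 𝔭, ⁅x, y⁆ ∈ 𝔨)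
    (hneg : ∀ x ∈ 𝔨, x ≠ 0 → killingForm ℝ L x x < 0)
    (hpos : ∀ x ∈ 𝔭, x ≠ 0 → 0 < killingForm ℝ L x x)
    (𝔟 V : Submodule ℝ L) (hbple : 𝔟 ≤ 𝔭) (hVple : V ≤ 𝔭)
    (hbb : ∀ x ∈ 𝔟, ∀ y ∈ 𝔟, ⁅x, y⁆ = (0 : L))
    (hbV : ∀ x ∈ 𝔟, ∀ y ∈ V, ⁅x, y⁆ = (0 : L)) :
    Module.finrank ℝ V + Module.finrank ℝ 𝔟 ≤ Module.finrank ℝ 𝔭 := by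
  classical
  set B := killingForm ℝ L with hBdef
  have hBsymm : ∀ x y : L, B x y = B y x := fun x y => LieModule.traceForm_comm ℝ L L x y
  have hBinv : ∀ x y z : L, B ⁅x, y⁆ z = - B y ⁅x, z⁆ := fun x y z =>
    LieModule.traceForm_apply_lie_apply' ℝ L L x y z
  -- projections
  set pk : L →ₗ[ℝ] 𝔨 := 𝔨.linearProjOfIsCompl 𝔭 hcompl with hpkdef
  set pp : L →ₗ[ℝ] 𝔭 := 𝔭.linearProjOfIsCompl 𝔨 hcompl.symm with hppdef
  have hsum : ∀ x : L, (pk x : L) + (pp x : L) = x := fun x =>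
    Submodule.projection_add_projection_eq_self hcompl x
  have hpk_k : ∀ x ∈ 𝔨, (pk x : L) = x := by
    intro x hx
    have : pk x = ⟨x, hx⟩ := Submodule.linearProjOfIsCompl_apply_left hcompl ⟨x, hx⟩
    rw [this]
  have hpk_p : ∀ x ∈ 𝔭, (pk x : L) = 0 := by
    intro x hx
    have : pk x = 0 := Submodule.linearProjOfIsCompl_apply_right' hcompl hx
    rw [this]; rfl
  have hpp_p : ∀ x ∈ 𝔭, (pp x : L) = x := by
    intro x hx
    have : pp x = ⟨x, hx⟩ := Submodule.linearProjOfIsCompl_apply_left hcompl.symm ⟨x, hx⟩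
    rw [this]
  have hpp_k : ∀ x ∈ 𝔨, (pp x : L) = 0 := by
    intro x hx
    have : pp x = 0 := Submodule.linearProjOfIsCompl_apply_right' hcompl.symm hx
    rw [this]; rfl
  -- the Cartan involution
  set θ : L →ₗ[ℝ] L := 𝔨.subtype ∘ₗ pk - 𝔭.subtype ∘ₗ pp with hθdef
  have hθ_apply : ∀ x : L, θ x = (pk x : L) - (pp x : L) := fun x => rfl
  have hθ_k : ∀ x ∈ 𝔨, θ x = x := by
    intro x hx; rw [hθ_apply, hpk_k x hx, hpp_k x hx, sub_zero]
  have hθ_p : ∀ x ∈ 𝔭, θ x = -x := by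
    intro x hx; rw [hθ_apply, hpk_p x hx, hpp_p x hx, zero_sub]
  -- Killing form vanishes on 𝔨 × 𝔭
  have hBkp : ∀ k ∈ 𝔨, ∀ p ∈ 𝔭, B k p = 0 := by
    intro k hk p hp
    set Pk : L →ₗ[ℝ] L := 𝔨.subtype ∘ₗ pk with hPk
    set Pp : L →ₗ[ℝ] L := 𝔭.subtype ∘ₗ pp with hPp
    have hPkPp : Pk + Pp = LinearMap.id := by
      ext x; exact hsum x
    have hPk_apply : ∀ x : L, Pk x = (pk x : L) := fun x => rfl
    have hPp_apply : ∀ x : L, Pp x = (pp x : L) := fun x => rfl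
    set T : L →ₗ[ℝ] L := (LieAlgebra.ad ℝ L k) ∘ₗ (LieAlgebra.ad ℝ L p) with hT
    have hTapp : ∀ x : L, T x = ⁅k, ⁅p, x⁆⁆ := fun x => rfl
    have hTk : ∀ x ∈ 𝔨, T x ∈ 𝔭 := by
      intro x hx
      rw [hTapp]
      have h1 : ⁅p, x⁆ ∈ 𝔭 := by
        rw [← lie_skew]
        exact Submodule.neg_mem _ (hkp x hx p hp)
      exact hkp k hk _ h1
    have hTp : ∀ x ∈ 𝔭, T x ∈ 𝔨 := by
      intro x hx
      rw [hTapp]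
      exact hkk k hk _ (hpp p hp x hx)
    have hPkTPk : Pk ∘ₗ (T ∘ₗ Pk) = 0 := by
      ext x
      simp only [LinearMap.comp_apply, LinearMap.zero_apply, hPk_apply]
      exact hpk_p _ (hTk _ (pk x).2)
    have hPpTPp : Pp ∘ₗ (T ∘ₗ Pp) = 0 := by
      ext x
      simp only [LinearMap.comp_apply, LinearMap.zero_apply, hPp_apply]
      exact hpp_k _ (hTp _ (pp x).2)
    have hPpPk : Pp ∘ₗ Pk = 0 := by
      ext x
      simp only [LinearMap.comp_apply, LinearMap.zero_apply, hPp_apply, hPk_apply]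
      exact hpp_k _ (pk x).2
    have hPkPp0 : Pk ∘ₗ Pp = 0 := by
      ext x
      simp only [LinearMap.comp_apply, LinearMap.zero_apply, hPp_apply, hPk_apply]
      exact hpk_p _ (pp x).2
    have htr1 : LinearMap.trace ℝ L (Pk ∘ₗ T) = 0 := by
      have h1 : Pk ∘ₗ T = Pk ∘ₗ (T ∘ₗ Pk) + Pk ∘ₗ (T ∘ₗ Pp) := by
        ext x
        simp only [LinearMap.comp_apply, LinearMap.add_apply]
        rw [← map_add, ← map_add, hPk_apply x, hPp_apply x, hsum x]
      rw [h1, map_add, hPkTPk, map_zero, zero_add, LinearMap.trace_comp_comm',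
        LinearMap.comp_assoc, hPpPk, LinearMap.comp_zero, map_zero]
    have htr2 : LinearMap.trace ℝ L (Pp ∘ₗ T) = 0 := by
      have h1 : Pp ∘ₗ T = Pp ∘ₗ (T ∘ₗ Pk) + Pp ∘ₗ (T ∘ₗ Pp) := by
        ext x
        simp only [LinearMap.comp_apply, LinearMap.add_apply]
        rw [← map_add, ← map_add, hPk_apply x, hPp_apply x, hsum x]
      rw [h1, map_add, hPpTPp, map_zero, add_zero, LinearMap.trace_comp_comm',
        LinearMap.comp_assoc, hPkPp0, LinearMap.comp_zero, map_zero]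
    have : B k p = LinearMap.trace ℝ L T := killingForm_apply_apply ℝ L k p
    rw [this, ← LinearMap.id_comp T, ← hPkPp, LinearMap.add_comp, map_add, htr1, htr2, add_zero]
  -- the Killing form in terms of components
  have hBθ : ∀ x y : L, - B x (θ y) = B (pp x : L) (pp y : L) - B (pk x : L) (pk y : L) := by
    intro x y
    conv_lhs => rw [← hsum x, hθ_apply y]
    rw [map_add]
    simp only [LinearMap.add_apply, map_sub]
    rw [hBkp _ (pk x).2 _ (pp y).2, hBsymm (pp x : L) (pk y : L), hBkp _ (pk y).2 _ (pp x).2]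
    ring
  -- the inner product
  set core : InnerProductSpace.Core ℝ L :=
    { inner := fun x y => - B x (θ y)
      conj_inner_symm := by
        intro x y
        simp only [starRingEnd_apply, star_trivial, RCLike.star_def]
        rw [hBθ, hBθ, hBsymm (pp y : L) (pp x : L), hBsymm (pk y : L) (pk x : L)]
      re_inner_nonneg := by
        intro x
        simp only [RCLike.re_to_real]
        rw [hBθ]
        have h1 : 0 ≤ B (pp x : L) (pp x : L) := by
          rcases eq_or_ne ((pp x : L)) 0 with h | h
          · rw [h]; simp
          · exact le_of_lt (hpos _ (pp x).2 h)
        have h2 : B (pk x : L) (pk x : L) ≤ 0 := by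
          rcases eq_or_ne ((pk x : L)) 0 with h | h
          · rw [h]; simp
          · exact le_of_lt (hneg _ (pk x).2 h)
        linarith
      definite := by
        intro x hx
        change - B x (θ x) = 0 at hx
        rw [hBθ] at hx
        have h1 : 0 ≤ B (pp x : L) (pp x : L) := by
          rcases eq_or_ne ((pp x : L)) 0 with h | h
          · rw [h]; simp
          · exact le_of_lt (hpos _ (pp x).2 h)
        have h2 : B (pk x : L) (pk x : L) ≤ 0 := by
          rcases eq_or_ne ((pk x : L)) 0 with h | h
          · rw [h]; simp
          · exact le_of_lt (hneg _ (pk x).2 h)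
        have hppz : (pp x : L) = 0 := by
          by_contra h
          have := hpos _ (pp x).2 h
          linarith
        have hpkz : (pk x : L) = 0 := by
          by_contra h
          have := hneg _ (pk x).2 h
          linarith
        rw [← hsum x, hppz, hpkz, add_zero]
      add_left := by
        intro x y z
        simp only [map_add, LinearMap.add_apply]
        ring
      smul_left := by
        intro x y r
        simp only [map_smul, LinearMap.smul_apply, starRingEnd_apply, star_trivial,
          smul_eq_mul]
        ring } with hcore
  letI : NormedAddCommGroup L := core.toNormedAddCommGroup
  letI : InnerProductSpace ℝ L := InnerProductSpace.ofCore core.toCore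
  have hinner : ∀ x y : L, ⟪x, y⟫ = - B x (θ y) := fun x y => rfl
  -- theta anti-commutes with ad of elements of 𝔭
  have hbθ : ∀ b ∈ 𝔭, ∀ y : L, ⁅b, θ y⁆ = - θ ⁅b, y⁆ := by
    intro b hb y
    have h1 : ⁅b, (pk y : L)⁆ ∈ 𝔭 := by
      rw [← lie_skew]
      exact Submodule.neg_mem _ (hkp _ (pk y).2 b hb)
    have h2 : ⁅b, (pp y : L)⁆ ∈ 𝔨 := hpp b hb _ (pp y).2
    have hy : ⁅b, y⁆ = ⁅b, (pk y : L)⁆ + ⁅b, (pp y : L)⁆ := by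
      rw [← lie_add, hsum y]
    rw [hθ_apply y, lie_sub, hy, map_add, hθ_k _ h2, hθ_p _ h1]
    abel
  -- ad of elements of 𝔭 is symmetric
  have hsym : ∀ b ∈ 𝔭, (LieAlgebra.ad ℝ L b).IsSymmetric := by
    intro b hb x y
    rw [hinner, hinner]
    have h1 : (LieAlgebra.ad ℝ L b) x = ⁅b, x⁆ := rfl
    have h2 : (LieAlgebra.ad ℝ L b) y = ⁅b, y⁆ := rfl
    rw [h1, h2, hBinv b x (θ y), hbθ b hb y, map_neg]
    ring
  -- basis of 𝔟
  set m := Module.finrank ℝ 𝔟 with hm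
  set bB : Basis (Fin m) ℝ 𝔟 := Module.finBasis ℝ 𝔟 with hbB
  set b : Fin m → L := fun i => (bB i : L) with hbfun
  have hbmem : ∀ i, b i ∈ 𝔟 := fun i => (bB i).2
  have hbInd : LinearIndependent ℝ b :=
    bB.linearIndependent.map' 𝔟.subtype (Submodule.ker_subtype 𝔟)
  -- the commuting family of symmetric operators
  set T : Fin m → (L →ₗ[ℝ] L) := fun i => (LieAlgebra.ad ℝ L (b i) : L →ₗ[ℝ] L) with hTdef
  have hTapp : ∀ i x, T i x = ⁅b i, x⁆ := fun i x => rfl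
  have hTsym : ∀ i, (T i).IsSymmetric := fun i => hsym (b i) (hbple (hbmem i))
  have hTcomm : Pairwise (Function.onFun Commute T) := by
    intro i j _
    have h0 : ⁅b i, b j⁆ = (0 : L) := hbb _ (hbmem i) _ (hbmem j)
    have h1 : ⁅T i, T j⁆ = (0 : L →ₗ[ℝ] L) := by
      have := (LieAlgebra.ad ℝ L).map_lie (b i) (b j)
      rw [h0] at this
      rw [← this]
      simp
    rw [Ring.lie_def] at h1
    exact sub_eq_zero.mp h1
  -- joint eigenspace decomposition
  set E : (Fin m → ℝ) → Submodule ℝ L :=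
    fun χ => ⨅ i, Module.End.eigenspace (T i) (χ i) with hEdef
  have htop : ⨆ χ, E χ = ⊤ :=
    LinearMap.IsSymmetric.iSup_iInf_eq_top_of_commute hTsym hTcomm
  -- orthogonality of joint eigenspaces
  have horth : ∀ χ χ' : Fin m → ℝ, χ ≠ χ' → ∀ x ∈ E χ, ∀ y ∈ E χ', ⟪x, y⟫ = 0 := by
    intro χ χ' hne x hx y hy
    obtain ⟨a, ha⟩ := Function.ne_iff.mp hne
    have hxa : T a x = χ a • x :=
      Module.End.mem_eigenspace_iff.mp (Submodule.mem_iInf _ |>.mp hx a)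
    have hya : T a y = χ' a • y :=
      Module.End.mem_eigenspace_iff.mp (Submodule.mem_iInf _ |>.mp hy a)
    have h1 := hTsym a x y
    rw [hxa, hya, real_inner_smul_left, real_inner_smul_right] at h1
    have h2 : (χ a - χ' a) * ⟪x, y⟫ = 0 := by ring_nf; linarith
    rcases mul_eq_zero.mp h2 with h | h
    · exact absurd (sub_eq_zero.mp h) ha
    · exact h
  -- the set of weights spans the dual
  set S : Set (Fin m → ℝ) := {χ | E χ ≠ ⊥} with hSdef
  have hspan : Submodule.span ℝ S = ⊤ := by
    by_contra hne
    obtain ⟨φ, hφ0, hφ⟩ := Submodule.exists_dual_map_eq_bot_of_lt_top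
      (lt_top_iff_ne_top.mpr hne) inferInstance
    set t : Fin m → ℝ := fun i => φ (fun j => if i = j then 1 else 0) with ht
    have hφχ : ∀ χ : Fin m → ℝ, φ χ = ∑ i, χ i * t i := by
      intro χ
      rw [LinearMap.pi_apply_eq_sum_univ φ χ]
      simp only [smul_eq_mul, ht]
    have hφS : ∀ χ ∈ S, φ χ = 0 := by
      intro χ hχ
      have h1 : φ χ ∈ Submodule.map φ (Submodule.span ℝ S) :=
        Submodule.mem_map_of_mem (Submodule.subset_span hχ)
      rw [hφ] at h1
      exact h1
    set b₀ : L := ∑ i, t i • b i with hb₀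
    have hb₀p : b₀ ∈ 𝔭 := Submodule.sum_mem _ fun i _ =>
      Submodule.smul_mem _ _ (hbple (hbmem i))
    have hker : ∀ χ, E χ ≤ LinearMap.ker (LieAlgebra.ad ℝ L b₀ : L →ₗ[ℝ] L) := by
      intro χ x hx
      rw [LinearMap.mem_ker]
      have hadsum : LieAlgebra.ad ℝ L b₀ = ∑ i, t i • LieAlgebra.ad ℝ L (b i) := by
        have h0 : LieAlgebra.ad ℝ L b₀ = (LieAlgebra.ad ℝ L).toLinearMap b₀ := rfl
        rw [h0, hb₀, map_sum]
        exact Finset.sum_congr rfl fun i _ => by rw [map_smul]; rfl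
      have hadx : (LieAlgebra.ad ℝ L b₀ : L →ₗ[ℝ] L) x = ∑ i, t i • ⁅b i, x⁆ := by
        rw [hadsum, LinearMap.sum_apply]
        exact Finset.sum_congr rfl fun i _ => by rw [LinearMap.smul_apply]; rfl
      by_cases hχS : χ ∈ S
      · have heig : ∀ i, ⁅b i, x⁆ = χ i • x := by
          intro i
          exact Module.End.mem_eigenspace_iff.mp (Submodule.mem_iInf _ |>.mp hx i)
        rw [hadx]
        have : ∑ i, t i • ⁅b i, x⁆ = (∑ i, χ i * t i) • x := by
          rw [Finset.sum_smul]
          exact Finset.sum_congr rfl fun i _ => by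
            rw [heig i, smul_smul, mul_comm]
        rw [this, ← hφχ, hφS χ hχS, zero_smul]
      · have : E χ = ⊥ := not_not.mp hχS
        rw [this] at hx
        have : x = 0 := hx
        rw [this, map_zero]
    have had0 : (LieAlgebra.ad ℝ L b₀ : L →ₗ[ℝ] L) = 0 := by
      rw [← LinearMap.ker_eq_top, eq_top_iff, ← htop]
      exact iSup_le hker
    have hB0 : B b₀ b₀ = 0 := by
      rw [hBdef, killingForm_apply_apply ℝ L b₀ b₀]
      rw [had0]
      simp
    have hb₀0 : b₀ = 0 := by
      by_contra h
      have := hpos b₀ hb₀p h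
      rw [hB0] at this
      exact lt_irrefl 0 this
    have ht0 : ∀ i, t i = 0 := by
      have := Fintype.linearIndependent_iff.mp hbInd t (by rw [← hb₀, hb₀0])
      exact this
    apply hφ0
    refine LinearMap.ext fun χ => ?_
    rw [hφχ χ]
    simp [ht0]
  -- choose m linearly independent weights
  obtain ⟨s, hsub, hspan_eq, hind⟩ := exists_linearIndependent ℝ S
  have hstop : Submodule.span ℝ s = ⊤ := by rw [hspan_eq, hspan]
  set bs : Basis s ℝ (Fin m → ℝ) := Basis.mk hind (by
    rw [Subtype.range_coe]
    rw [hstop]) with hbs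
  haveI : Fintype s := FiniteDimensional.fintypeBasisIndex bs
  have hcard : Fintype.card s = m := by
    have h1 := Module.finrank_eq_card_basis bs
    rw [Module.finrank_fin_fun] at h1
    exact h1.symm
  set eqv : Fin m ≃ s := (Fintype.equivFinOfCardEq hcard).symm with heqv
  set c : Fin m → (Fin m → ℝ) := fun j => ((eqv j : s) : Fin m → ℝ) with hc
  have hcS : ∀ j, c j ∈ S := fun j => hsub (eqv j).2
  have hcInd : LinearIndependent ℝ c := hind.comp eqv eqv.injective
  have hc0 : ∀ j, c j ≠ 0 := fun j => hcInd.ne_zero j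
  have hcadd : ∀ j l, c j + c l ≠ 0 := by
    intro j l hzero
    by_cases hjl : j = l
    · subst hjl
      have h2 : (2 : ℝ) • c j = 0 := by rw [two_smul]; exact hzero
      rcases smul_eq_zero.mp h2 with h | h
      · norm_num at h
      · exact hc0 j h
    · have hsum2 : ∀ a : Fin m, ∑ i, (if i = a then (1 : ℝ) else 0) • c i = c a := by
        intro a
        rw [Finset.sum_congr rfl (fun i _ => by rw [ite_smul, one_smul, zero_smul])]
        rw [Finset.sum_ite_eq' Finset.univ a c]
        simp
      have hco := Fintype.linearIndependent_iff.mp hcInd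
        (fun i => (if i = j then (1 : ℝ) else 0) + (if i = l then 1 else 0)) (by
          rw [Finset.sum_congr rfl (fun i _ => add_smul _ _ _), Finset.sum_add_distrib,
            hsum2 j, hsum2 l, hzero])
      have h1 := hco j
      simp only [if_pos rfl, if_neg hjl] at h1
      norm_num at h1
  -- joint eigenvectors
  have hEc : ∀ j, ∃ x, x ∈ E (c j) ∧ x ≠ 0 := fun j =>
    Submodule.exists_mem_ne_zero_of_ne_bot (hcS j)
  choose e heE hene using hEc
  have hθE : ∀ j, θ (e j) ∈ E (-(c j)) := by
    intro j
    refine Submodule.mem_iInf _ |>.mpr fun i => ?_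
    rw [Module.End.mem_eigenspace_iff]
    have h1 : T i (θ (e j)) = ⁅b i, θ (e j)⁆ := rfl
    have h2 : ⁅b i, e j⁆ = c j i • e j := by
      have := Module.End.mem_eigenspace_iff.mp (Submodule.mem_iInf _ |>.mp (heE j) i)
      exact this
    rw [h1, hbθ (b i) (hbple (hbmem i)) (e j), h2, map_smul]
    simp
  set v : Fin m → L := fun j => e j - θ (e j) with hvdef
  have hvp : ∀ j, v j ∈ 𝔭 := by
    intro j
    have h1 : v j = (pp (e j) : L) + (pp (e j) : L) := by
      have h2 := hsum (e j)
      rw [show v j = e j - θ (e j) from rfl, hθ_apply]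
      generalize hA : (pk (e j) : L) = A at h2 ⊢
      generalize hC : (pp (e j) : L) = C at h2 ⊢
      rw [← h2]
      abel
    rw [h1]
    exact Submodule.add_mem _ (pp (e j)).2 (pp (e j)).2
  -- basis of V
  set d := Module.finrank ℝ V with hd
  set wB : Basis (Fin d) ℝ V := Module.finBasis ℝ V with hwB
  set w : Fin d → L := fun k => (wB k : L) with hw
  have hwV : ∀ k, w k ∈ V := fun k => (wB k).2
  have hwInd : LinearIndependent ℝ w :=
    wB.linearIndependent.map' V.subtype (Submodule.ker_subtype V)
  have hwE0 : ∀ k, w k ∈ E (0 : Fin m → ℝ) := by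
    intro k
    refine Submodule.mem_iInf _ |>.mpr fun i => ?_
    rw [Module.End.mem_eigenspace_iff]
    have h1 : T i (w k) = ⁅b i, w k⁆ := rfl
    rw [h1, hbV _ (hbmem i) _ (hwV k)]
    simp
  -- inner product computations
  have hθe0 : ∀ l j, ⟪θ (e l), e j⟫ = 0 := by
    intro l j
    refine horth _ _ ?_ _ (hθE l) _ (heE j)
    intro h
    exact hcadd j l (by rw [← h]; abel)
  have hve : ∀ l j, ⟪v l, e j⟫ = if l = j then ⟪e j, e j⟫ else 0 := by
    intro l j
    rw [show v l = e l - θ (e l) from rfl, inner_sub_left, hθe0 l j, sub_zero]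
    by_cases h : l = j
    · subst h; simp
    · rw [if_neg h]
      exact horth _ _ (hcInd.injective.ne h) _ (heE l) _ (heE j)
  have hwe : ∀ k j, ⟪w k, e j⟫ = 0 := by
    intro k j
    exact horth _ _ (fun h => hc0 j h.symm) _ (hwE0 k) _ (heE j)
  -- the combined family
  set gL : Fin m ⊕ Fin d → L := Sum.elim v w with hgL
  have hgLInd : LinearIndependent ℝ gL := by
    rw [Fintype.linearIndependent_iff]
    intro co hco
    rw [Fintype.sum_sum_type] at hco
    simp only [hgL, Sum.elim_inl, Sum.elim_inr] at hco
    have ha : ∀ j, co (Sum.inl j) = 0 := by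
      intro j
      have h1 : ⟪∑ l, co (Sum.inl l) • v l + ∑ k, co (Sum.inr k) • w k, e j⟫ = (0 : ℝ) := by
        rw [hco, inner_zero_left]
      rw [inner_add_left, sum_inner, sum_inner] at h1
      have h2 : ∀ k, ⟪co (Sum.inr k) • w k, e j⟫ = 0 := fun k => by
        rw [real_inner_smul_left, hwe k j, mul_zero]
      rw [Finset.sum_congr rfl (fun k _ => h2 k), Finset.sum_const_zero, add_zero] at h1
      have h3 : ∀ l, ⟪co (Sum.inl l) • v l, e j⟫
          = if l = j then co (Sum.inl l) * ⟪e j, e j⟫ else 0 := fun l => by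
        rw [real_inner_smul_left, hve l j]
        by_cases h : l = j <;> simp [h]
      rw [Finset.sum_congr rfl (fun l _ => h3 l)] at h1
      rw [Finset.sum_ite_eq' Finset.univ j (fun l => co (Sum.inl l) * ⟪e j, e j⟫)] at h1
      simp only [Finset.mem_univ, if_true] at h1
      rcases mul_eq_zero.mp h1 with h | h
      · exact h
      · exact absurd (inner_self_eq_zero.mp h) (hene j)
    have h4 : ∑ k, co (Sum.inr k) • w k = 0 := by
      rw [Finset.sum_congr rfl (fun l _ => by rw [ha l, zero_smul]),
        Finset.sum_const_zero, zero_add] at hco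
      exact hco
    have hβ : ∀ k, co (Sum.inr k) = 0 :=
      fun k => Fintype.linearIndependent_iff.mp hwInd _ h4 k
    intro i
    cases i with
    | inl j => exact ha j
    | inr k => exact hβ k
  set g : Fin m ⊕ Fin d → 𝔭 :=
    Sum.elim (fun j => (⟨v j, hvp j⟩ : 𝔭)) (fun k => (⟨w k, hVple (hwV k)⟩ : 𝔭)) with hg
  have hcomp : 𝔭.subtype ∘ g = gL := by
    funext i
    cases i with
    | inl j => rfl
    | inr k => rfl
  have hgInd : LinearIndependent ℝ g := by
    apply LinearIndependent.of_comp 𝔭.subtype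
    rw [hcomp]
    exact hgLInd
  have hfinal := hgInd.fintype_card_le_finrank
  rw [Fintype.card_sum, Fintype.card_fin, Fintype.card_fin] at hfinal
  omega

/-- **Carlson–Toledo dimension bound.** Let `𝔤 = 𝔨 ⊕ 𝔭` be a Cartan decomposition of a
finite-dimensional real Lie algebra whose Killing form is negative definite on `𝔨` and
positive definite on `𝔭`. Every abelian ℂ-subspace `𝔞` of `𝔭^ℂ ⊆ 𝔤^ℂ` satisfies
`dim_ℂ 𝔞 ≤ ½ dim_ℝ 𝔭`. -/
theorem carlson_toledo_dim_bound {L : Type*} [LieRing L] [LieAlgebra ℝ L]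
    [Module.Finite ℝ L]
    (𝔨 𝔭 : Submodule ℝ L) (hcompl : IsCompl 𝔨 𝔭)
    (hkk : ∀ x ∈ 𝔨, ∀ y ∈ 𝔨, ⁅x, y⁆ ∈ 𝔨)
    (hkp : ∀ x ∈ 𝔨, ∀ y ∈ 𝔭, ⁅x, y⁆ ∈ 𝔭)
    (hpp : ∀ x ∈ 𝔭, ∀ y ∈ 𝔭, ⁅x, y⁆ ∈ 𝔨)
    (hneg : ∀ x ∈ 𝔨, x ≠ 0 → killingForm ℝ L x x < 0)
    (hpos : ∀ x ∈ 𝔭, x ≠ 0 → 0 < killingForm ℝ L x x)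
    (𝔞 : Submodule ℂ (ℂ ⊗[ℝ] L)) (h𝔞 : 𝔞 ≤ Submodule.baseChange ℂ 𝔭)
    (habel : ∀ X ∈ 𝔞, ∀ Y ∈ 𝔞, ⁅X, Y⁆ = (0 : ℂ ⊗[ℝ] L)) :
    2 * Module.finrank ℂ 𝔞 ≤ Module.finrank ℝ 𝔭 := by
  classical
  -- real and imaginary part maps
  set reL : ℂ ⊗[ℝ] L →ₗ[ℝ] L :=
    TensorProduct.lift ((LinearMap.lsmul ℝ L).comp Complex.reLm) with hreL
  set imL : ℂ ⊗[ℝ] L →ₗ[ℝ] L :=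
    TensorProduct.lift ((LinearMap.lsmul ℝ L).comp Complex.imLm) with himL
  have hre_tmul : ∀ (a : ℂ) (x : L), reL (a ⊗ₜ[ℝ] x) = a.re • x := fun a x => rfl
  have him_tmul : ∀ (a : ℂ) (x : L), imL (a ⊗ₜ[ℝ] x) = a.im • x := fun a x => rfl
  have hdecomp : ∀ z : ℂ ⊗[ℝ] L, (1 : ℂ) ⊗ₜ[ℝ] reL z + Complex.I ⊗ₜ[ℝ] imL z = z := by
    intro z
    induction z using TensorProduct.induction_on with
    | zero => simp
    | tmul a x =>
      rw [hre_tmul, him_tmul, TensorProduct.tmul_smul, TensorProduct.tmul_smul,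
        TensorProduct.smul_tmul', TensorProduct.smul_tmul', ← TensorProduct.add_tmul]
      congr 1
      simp only [smul_eq_mul, Complex.real_smul]
      rw [mul_one]
      exact Complex.re_add_im a
    | add x y hx hy =>
      rw [map_add, map_add, TensorProduct.tmul_add, TensorProduct.tmul_add,
        add_add_add_comm, hx, hy]
  have hre_smul : ∀ (a : ℂ) (z : ℂ ⊗[ℝ] L), reL (a • z) = a.re • reL z - a.im • imL z := by
    intro a z
    induction z using TensorProduct.induction_on with
    | zero => simp
    | tmul cx x =>
      rw [TensorProduct.smul_tmul', smul_eq_mul, hre_tmul, hre_tmul, him_tmul,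
        smul_smul, smul_smul, ← sub_smul, Complex.mul_re]
    | add u w hu hw =>
      rw [smul_add, map_add, hu, hw, map_add, map_add, smul_add, smul_add]
      abel
  have him_smul : ∀ (a : ℂ) (z : ℂ ⊗[ℝ] L), imL (a • z) = a.re • imL z + a.im • reL z := by
    intro a z
    induction z using TensorProduct.induction_on with
    | zero => simp
    | tmul cx x =>
      rw [TensorProduct.smul_tmul', smul_eq_mul, him_tmul, him_tmul, hre_tmul,
        smul_smul, smul_smul, ← add_smul, Complex.mul_im, add_comm (a.re * cx.im)]
    | add u w hu hw =>
      rw [smul_add, map_add, hu, hw, map_add, map_add, smul_add, smul_add]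
      abel
  -- real and imaginary parts of elements of the base change of 𝔭 lie in 𝔭
  have hbase : ∀ z ∈ Submodule.baseChange ℂ 𝔭, reL z ∈ 𝔭 ∧ imL z ∈ 𝔭 := by
    intro z hz
    rw [Submodule.baseChange_eq_span] at hz
    refine Submodule.span_induction ?_ ?_ ?_ ?_ hz
    · rintro _ ⟨x, hx, rfl⟩
      rw [TensorProduct.mk_apply]
      constructor
      · rw [hre_tmul]; simpa using hx
      · rw [him_tmul]; simp
    · simp
    · intro x y _ _ hx hy
      exact ⟨by rw [map_add]; exact Submodule.add_mem _ hx.1 hy.1,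
        by rw [map_add]; exact Submodule.add_mem _ hx.2 hy.2⟩
    · intro a x _ hx
      constructor
      · rw [hre_smul]
        exact Submodule.sub_mem _ (Submodule.smul_mem _ _ hx.1) (Submodule.smul_mem _ _ hx.2)
      · rw [him_smul]
        exact Submodule.add_mem _ (Submodule.smul_mem _ _ hx.2) (Submodule.smul_mem _ _ hx.1)
  -- the relevant real subspaces of 𝔭
  set 𝔸 : Submodule ℝ (ℂ ⊗[ℝ] L) := 𝔞.restrictScalars ℝ with h𝔸
  set Vr : Submodule ℝ L := 𝔸.map reL with hVr
  set 𝔟r : Submodule ℝ L := 𝔸.comap (TensorProduct.mk ℝ ℂ L 1) with h𝔟r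
  have h𝔟mem : ∀ x : L, x ∈ 𝔟r ↔ (1 : ℂ) ⊗ₜ[ℝ] x ∈ 𝔞 := fun x => Iff.rfl
  have hVple : Vr ≤ 𝔭 := by
    rintro _ ⟨z, hz, rfl⟩
    exact (hbase z (h𝔞 hz)).1
  have h𝔟ple : 𝔟r ≤ 𝔭 := by
    intro x hx
    have h1 := (hbase _ (h𝔞 ((h𝔟mem x).mp hx))).1
    rw [hre_tmul] at h1
    simpa using h1
  -- brackets vanish
  have hbb : ∀ x ∈ 𝔟r, ∀ y ∈ 𝔟r, ⁅x, y⁆ = (0 : L) := by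
    intro x hx y hy
    have h1 := habel _ ((h𝔟mem x).mp hx) _ ((h𝔟mem y).mp hy)
    rw [LieAlgebra.ExtendScalars.bracket_tmul, one_mul] at h1
    have h2 := congrArg reL h1
    rw [hre_tmul, map_zero] at h2
    simpa using h2
  have hbV : ∀ x ∈ 𝔟r, ∀ y ∈ Vr, ⁅x, y⁆ = (0 : L) := by
    intro x hx y hy
    obtain ⟨Z, hZ, rfl⟩ := hy
    have h1 := habel _ ((h𝔟mem x).mp hx) Z hZ
    have h2a : ⁅(1 : ℂ) ⊗ₜ[ℝ] x, Z⁆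
        = ⁅(1 : ℂ) ⊗ₜ[ℝ] x, (1 : ℂ) ⊗ₜ[ℝ] reL Z⁆
          + ⁅(1 : ℂ) ⊗ₜ[ℝ] x, Complex.I ⊗ₜ[ℝ] imL Z⁆ := by
      conv_lhs => rw [← hdecomp Z]
      exact lie_add ((1 : ℂ) ⊗ₜ[ℝ] x) ((1 : ℂ) ⊗ₜ[ℝ] reL Z) (Complex.I ⊗ₜ[ℝ] imL Z)
    have h2 : ⁅(1 : ℂ) ⊗ₜ[ℝ] x, Z⁆
        = (1 : ℂ) ⊗ₜ[ℝ] ⁅x, reL Z⁆ + Complex.I ⊗ₜ[ℝ] ⁅x, imL Z⁆ := by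
      rw [h2a, LieAlgebra.ExtendScalars.bracket_tmul,
        LieAlgebra.ExtendScalars.bracket_tmul, one_mul, one_mul]
    rw [h2] at h1
    have h3 := congrArg reL h1
    rw [map_add, hre_tmul, hre_tmul, map_zero, Complex.one_re, Complex.I_re, one_smul,
      zero_smul, add_zero] at h3
    exact h3
  -- rank-nullity
  set f : 𝔸 →ₗ[ℝ] L := reL ∘ₗ 𝔸.subtype with hf
  have hrange : LinearMap.range f = Vr := by
    rw [hf, LinearMap.range_comp, Submodule.range_subtype]
  set j : LinearMap.ker f →ₗ[ℝ] L := imL ∘ₗ 𝔸.subtype ∘ₗ (LinearMap.ker f).subtype with hj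
  have hjinj : Function.Injective j := by
    intro X Y hXY
    have h1 : ∀ W : LinearMap.ker f, reL (W.1 : ℂ ⊗[ℝ] L) = 0 := fun W => W.2
    have hXY' : imL (X.1 : ℂ ⊗[ℝ] L) = imL (Y.1 : ℂ ⊗[ℝ] L) := hXY
    have h2 : (X.1 : ℂ ⊗[ℝ] L) = (Y.1 : ℂ ⊗[ℝ] L) :=
      calc (X.1 : ℂ ⊗[ℝ] L)
          = (1 : ℂ) ⊗ₜ[ℝ] reL (X.1 : ℂ ⊗[ℝ] L)
            + Complex.I ⊗ₜ[ℝ] imL (X.1 : ℂ ⊗[ℝ] L) := (hdecomp _).symm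
        _ = (1 : ℂ) ⊗ₜ[ℝ] reL (Y.1 : ℂ ⊗[ℝ] L)
            + Complex.I ⊗ₜ[ℝ] imL (Y.1 : ℂ ⊗[ℝ] L) := by rw [h1 X, h1 Y, hXY']
        _ = (Y.1 : ℂ ⊗[ℝ] L) := hdecomp _
    exact Subtype.ext (Subtype.ext h2)
  have hjrange : LinearMap.range j = 𝔟r := by
    apply le_antisymm
    · rintro _ ⟨X, rfl⟩
      rw [h𝔟mem]
      have h1 : reL (X.1 : ℂ ⊗[ℝ] L) = 0 := X.2
      have h2 : (X.1 : ℂ ⊗[ℝ] L) = Complex.I ⊗ₜ[ℝ] imL (X.1 : ℂ ⊗[ℝ] L) :=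
        calc (X.1 : ℂ ⊗[ℝ] L)
            = (1 : ℂ) ⊗ₜ[ℝ] reL (X.1 : ℂ ⊗[ℝ] L)
              + Complex.I ⊗ₜ[ℝ] imL (X.1 : ℂ ⊗[ℝ] L) := (hdecomp _).symm
          _ = Complex.I ⊗ₜ[ℝ] imL (X.1 : ℂ ⊗[ℝ] L) := by
              rw [h1, TensorProduct.tmul_zero, zero_add]
      have h3 : (1 : ℂ) ⊗ₜ[ℝ] imL (X.1 : ℂ ⊗[ℝ] L)
          = (-Complex.I) • (X.1 : ℂ ⊗[ℝ] L) := by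
        conv_rhs => rw [h2]
        rw [TensorProduct.smul_tmul', smul_eq_mul, neg_mul, Complex.I_mul_I, neg_neg]
      have h4 : j X = imL (X.1 : ℂ ⊗[ℝ] L) := rfl
      rw [h4, h3]
      exact Submodule.smul_mem _ _ (X.1.2 : (X.1 : ℂ ⊗[ℝ] L) ∈ 𝔞)
    · intro u hu
      have h1 : (Complex.I ⊗ₜ[ℝ] u : ℂ ⊗[ℝ] L) ∈ 𝔞 := by
        have h2 : (Complex.I ⊗ₜ[ℝ] u : ℂ ⊗[ℝ] L) = Complex.I • ((1 : ℂ) ⊗ₜ[ℝ] u) := by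
          rw [TensorProduct.smul_tmul', smul_eq_mul, mul_one]
        rw [h2]
        exact Submodule.smul_mem _ _ ((h𝔟mem u).mp hu)
      have h3 : reL (Complex.I ⊗ₜ[ℝ] u) = 0 := by
        rw [hre_tmul, Complex.I_re, zero_smul]
      have hker : (⟨Complex.I ⊗ₜ[ℝ] u, h1⟩ : 𝔸) ∈ LinearMap.ker f := h3
      refine ⟨⟨⟨Complex.I ⊗ₜ[ℝ] u, h1⟩, hker⟩, ?_⟩
      have h4 : j ⟨⟨Complex.I ⊗ₜ[ℝ] u, h1⟩, hker⟩ = imL (Complex.I ⊗ₜ[ℝ] u) := rfl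
      rw [h4, him_tmul, Complex.I_im, one_smul]
  have hkerrank : Module.finrank ℝ (LinearMap.ker f) = Module.finrank ℝ 𝔟r := by
    rw [← hjrange]
    exact (LinearMap.finrank_range_of_inj hjinj).symm
  have hrank := LinearMap.finrank_range_add_finrank_ker f
  rw [hrange, hkerrank] at hrank
  -- relating real and complex dimensions
  have htower : Module.finrank ℝ ℂ * Module.finrank ℂ 𝔞 = Module.finrank ℝ 𝔞 :=
    Module.finrank_mul_finrank ℝ ℂ 𝔞
  have hres : Module.finrank ℝ 𝔸 = Module.finrank ℝ 𝔞 :=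
    ((Submodule.restrictScalarsEquiv ℝ ℂ (ℂ ⊗[ℝ] L) 𝔞).restrictScalars ℝ).finrank_eq
  have h2dim : 2 * Module.finrank ℂ 𝔞 = Module.finrank ℝ 𝔸 := by
    rw [hres, ← htower, Complex.finrank_real_complex]
  -- conclusion
  have hmain := carlson_toledo_aux 𝔨 𝔭 hcompl hkk hkp hpp hneg hpos 𝔟r Vr h𝔟ple hVple hbb hbV
  omega
end

section
/- Let 𝔤 be a finite-dimensional real Lie algebra with Killing form B, and suppose 𝔤 = 𝔨 ⊕ 𝔭 is a direct sum of real subspaces with [𝔨,𝔨] ⊆ 𝔨, [𝔨,𝔭] ⊆ 𝔭, [𝔭,𝔭] ⊆ 𝔨, such that B is negative definite on 𝔨 and positive definite on 𝔭. Let B^ℂ be the ℂ-bilinear extension of B to 𝔤^ℂ and σ the conjugation of 𝔤^ℂ fixing 𝔤. Then for all X, Y ∈ 𝔭^ℂ, the number B^ℂ([X, Y], σ([X, Y])) is real and nonpositive, and it equals 0 if and only if [X, Y] = 0. -/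
open scoped TensorProduct

section Aux

variable {L : Type*} [AddCommGroup L] [Module ℝ L]

/-- The "real part" map `ℂ ⊗[ℝ] L → L`. -/
noncomputable def reT (L : Type*) [AddCommGroup L] [Module ℝ L] :
    (ℂ ⊗[ℝ] L) →ₗ[ℝ] L :=
  TensorProduct.lift ((LinearMap.lsmul ℝ L).comp Complex.reLm)

/-- The "imaginary part" map `ℂ ⊗[ℝ] L → L`. -/
noncomputable def imT (L : Type*) [AddCommGroup L] [Module ℝ L] :
    (ℂ ⊗[ℝ] L) →ₗ[ℝ] L :=
  TensorProduct.lift ((LinearMap.lsmul ℝ L).comp Complex.imLm)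

@[simp] lemma reT_tmul (z : ℂ) (x : L) : reT L (z ⊗ₜ[ℝ] x) = z.re • x := rfl
@[simp] lemma imT_tmul (z : ℂ) (x : L) : imT L (z ⊗ₜ[ℝ] x) = z.im • x := rfl

lemma tensor_decomp (W : ℂ ⊗[ℝ] L) :
    W = (1 : ℂ) ⊗ₜ[ℝ] (reT L W) + Complex.I ⊗ₜ[ℝ] (imT L W) := by
  induction W using TensorProduct.induction_on with
  | zero => simp
  | tmul z x =>
    rw [reT_tmul, imT_tmul, TensorProduct.tmul_smul, TensorProduct.tmul_smul,
      TensorProduct.smul_tmul', TensorProduct.smul_tmul', ← TensorProduct.add_tmul]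
    congr 1
    simp [Complex.real_smul]
  | add u v hu hv =>
    rw [map_add, map_add, TensorProduct.tmul_add, TensorProduct.tmul_add]
    conv_lhs => rw [hu, hv]
    abel

lemma reT_smul (c : ℂ) (W : ℂ ⊗[ℝ] L) :
    reT L (c • W) = c.re • reT L W - c.im • imT L W := by
  induction W using TensorProduct.induction_on with
  | zero => simp
  | tmul z x =>
    rw [TensorProduct.smul_tmul', smul_eq_mul, reT_tmul, reT_tmul, imT_tmul,
      Complex.mul_re, sub_smul, mul_smul, mul_smul]
  | add u v hu hv => simp only [smul_add, map_add, hu, hv, smul_add]; abel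

lemma imT_smul (c : ℂ) (W : ℂ ⊗[ℝ] L) :
    imT L (c • W) = c.re • imT L W + c.im • reT L W := by
  induction W using TensorProduct.induction_on with
  | zero => simp
  | tmul z x =>
    rw [TensorProduct.smul_tmul', smul_eq_mul, imT_tmul, imT_tmul, reT_tmul,
      Complex.mul_im, add_smul, mul_smul, mul_smul, add_comm]
  | add u v hu hv => simp only [smul_add, map_add, hu, hv, smul_add]; abel

lemma reT_imT_mem {p : Submodule ℝ L} {W : ℂ ⊗[ℝ] L}
    (hW : W ∈ p.baseChange ℂ) : reT L W ∈ p ∧ imT L W ∈ p := by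
  rw [Submodule.baseChange_eq_span] at hW
  refine Submodule.span_induction ?_ ?_ ?_ ?_ hW
  · rintro x ⟨m, hm, rfl⟩
    simp only [TensorProduct.mk_apply, reT_tmul, imT_tmul, Complex.one_re, Complex.one_im,
      one_smul, zero_smul]
    exact ⟨hm, p.zero_mem⟩
  · simp only [map_zero]; exact ⟨p.zero_mem, p.zero_mem⟩
  · intro x y _ _ hx hy
    simp only [map_add]
    exact ⟨p.add_mem hx.1 hy.1, p.add_mem hx.2 hy.2⟩
  · intro c x _ hx
    rw [reT_smul, imT_smul]
    exact ⟨p.sub_mem (p.smul_mem _ hx.1) (p.smul_mem _ hx.2),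
      p.add_mem (p.smul_mem _ hx.2) (p.smul_mem _ hx.1)⟩

end Aux

lemma bracket_mem_baseChange {L : Type*} [LieRing L] [LieAlgebra ℝ L]
    {p q r : Submodule ℝ L} (h : ∀ x ∈ p, ∀ y ∈ q, ⁅x, y⁆ ∈ r)
    {X Y : ℂ ⊗[ℝ] L} (hX : X ∈ p.baseChange ℂ) (hY : Y ∈ q.baseChange ℂ) :
    ⁅X, Y⁆ ∈ r.baseChange ℂ := by
  refine Submodule.span_induction (p := fun X _ => ⁅X, Y⁆ ∈ r.baseChange ℂ)
    ?_ (by simp) (fun a b _ _ ha hb => by rw [add_lie]; exact Submodule.add_mem _ ha hb)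
    (fun c a _ ha => by rw [smul_lie (R := ℂ)]; exact Submodule.smul_mem _ c ha) (by rwa [Submodule.baseChange_eq_span] at hX)
  rintro _ ⟨x, hx, rfl⟩
  refine Submodule.span_induction
    (p := fun Y _ => ⁅(TensorProduct.mk ℝ ℂ L 1) x, Y⁆ ∈ r.baseChange ℂ)
    ?_ (by rw [← lie_skew, zero_lie, neg_zero]; exact Submodule.zero_mem _)
    (fun a b _ _ ha hb => by
      rw [← lie_skew, add_lie, neg_add, lie_skew, lie_skew]
      exact Submodule.add_mem _ ha hb)
    (fun c a _ ha => by
      rw [← lie_skew, smul_lie (R := ℂ), ← smul_neg, lie_skew]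
      exact Submodule.smul_mem _ c ha) (by rwa [Submodule.baseChange_eq_span] at hY)
  rintro _ ⟨y, hy, rfl⟩
  simp only [TensorProduct.mk_apply]
  rw [LieAlgebra.ExtendScalars.bracket_tmul, one_mul]
  exact Submodule.tmul_mem_baseChange_of_mem _ (h x hx y hy)

/-- Let `𝔤 = 𝔨 ⊕ 𝔭` be a Cartan decomposition of a finite-dimensional real Lie algebra
whose Killing form `B` is negative definite on `𝔨` and positive definite on `𝔭`. Let
`B^ℂ` be the ℂ-bilinear extension of `B` to `𝔤^ℂ` and `σ` the conjugation fixing `𝔤`.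
Then for `X, Y ∈ 𝔭^ℂ`, the number `B^ℂ([X,Y], σ([X,Y]))` is real and nonpositive, and
vanishes iff `[X,Y] = 0` (strongly nonpositive curvature of the symmetric space). -/
theorem killing_bracket_conj_nonpos {L : Type*} [LieRing L] [LieAlgebra ℝ L]
    [Module.Finite ℝ L]
    (𝔨 𝔭 : Submodule ℝ L) (hcompl : IsCompl 𝔨 𝔭)
    (hkk : ∀ x ∈ 𝔨, ∀ y ∈ 𝔨, ⁅x, y⁆ ∈ 𝔨)
    (hkp : ∀ x ∈ 𝔨, ∀ y ∈ 𝔭, ⁅x, y⁆ ∈ 𝔭)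
    (hpp : ∀ x ∈ 𝔭, ∀ y ∈ 𝔭, ⁅x, y⁆ ∈ 𝔨)
    (hneg : ∀ x ∈ 𝔨, x ≠ 0 → killingForm ℝ L x x < 0)
    (hpos : ∀ x ∈ 𝔭, x ≠ 0 → 0 < killingForm ℝ L x x)
    (Bc : (ℂ ⊗[ℝ] L) →ₗ[ℂ] (ℂ ⊗[ℝ] L) →ₗ[ℂ] ℂ)
    (hBc : ∀ x y : L, Bc ((1 : ℂ) ⊗ₜ[ℝ] x) ((1 : ℂ) ⊗ₜ[ℝ] y) = (killingForm ℝ L x y : ℂ))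
    (σ : (ℂ ⊗[ℝ] L) →ₗ[ℝ] (ℂ ⊗[ℝ] L))
    (hσ : ∀ (z : ℂ) (x : L), σ (z ⊗ₜ[ℝ] x) = (starRingEnd ℂ z) ⊗ₜ[ℝ] x)
    (X Y : ℂ ⊗[ℝ] L)
    (hX : X ∈ Submodule.baseChange ℂ 𝔭) (hY : Y ∈ Submodule.baseChange ℂ 𝔭) :
    (Bc ⁅X, Y⁆ (σ ⁅X, Y⁆)).im = 0 ∧
    (Bc ⁅X, Y⁆ (σ ⁅X, Y⁆)).re ≤ 0 ∧
    (Bc ⁅X, Y⁆ (σ ⁅X, Y⁆) = 0 ↔ ⁅X, Y⁆ = (0 : ℂ ⊗[ℝ] L)) := by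
  set Z : ℂ ⊗[ℝ] L := ⁅X, Y⁆ with hZdef
  have hZmem : Z ∈ Submodule.baseChange ℂ 𝔨 := bracket_mem_baseChange hpp hX hY
  set a : L := reT L Z with ha_def
  set b : L := imT L Z with hb_def
  obtain ⟨ha, hb⟩ := reT_imT_mem hZmem
  have hdec : Z = (1 : ℂ) ⊗ₜ[ℝ] a + Complex.I ⊗ₜ[ℝ] b := tensor_decomp Z
  have hIb : Complex.I ⊗ₜ[ℝ] b = Complex.I • ((1 : ℂ) ⊗ₜ[ℝ] b) := by
    rw [TensorProduct.smul_tmul', smul_eq_mul, mul_one]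
  have hnIb : (-Complex.I) ⊗ₜ[ℝ] b = -(Complex.I • ((1 : ℂ) ⊗ₜ[ℝ] b)) := by
    rw [TensorProduct.smul_tmul', smul_eq_mul, mul_one, TensorProduct.neg_tmul]
  have hσZ : σ Z = (1 : ℂ) ⊗ₜ[ℝ] a - Complex.I • ((1 : ℂ) ⊗ₜ[ℝ] b) := by
    rw [hdec, map_add, hσ, hσ, map_one, Complex.conj_I, hnIb, sub_eq_add_neg]
  have hsymm : killingForm ℝ L b a = killingForm ℝ L a b :=
    LieModule.traceForm_comm ℝ L L b a
  have key : Bc Z (σ Z) = ((killingForm ℝ L a a + killingForm ℝ L b b : ℝ) : ℂ) := by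
    rw [hσZ]
    conv_lhs => rw [hdec, hIb]
    simp only [map_add, map_sub, map_smul, LinearMap.add_apply, LinearMap.sub_apply,
      LinearMap.smul_apply, hBc, smul_eq_mul, hsymm]
    push_cast
    ring_nf
    rw [Complex.I_sq]
    ring
  have hBaa : killingForm ℝ L a a ≤ 0 := by
    by_cases h : a = 0
    · simp [h]
    · exact (hneg a ha h).le
  have hBbb : killingForm ℝ L b b ≤ 0 := by
    by_cases h : b = 0
    · simp [h]
    · exact (hneg b hb h).le
  refine ⟨by rw [key]; exact Complex.ofReal_im _, by rw [key]; simpa using add_nonpos hBaa hBbb, ?_⟩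
  constructor
  · intro h0
    rw [key] at h0
    have hsum : killingForm ℝ L a a + killingForm ℝ L b b = 0 := by exact_mod_cast h0
    have ha0 : a = 0 := by
      by_contra hne
      have := hneg a ha hne
      linarith
    have hb0 : b = 0 := by
      by_contra hne
      have := hneg b hb hne
      linarith
    rw [hdec, ha0, hb0]
    simp
  · intro h0
    rw [h0, map_zero, map_zero, LinearMap.zero_apply]
end

section
/- Let 𝔤 be a finite-dimensional real Lie algebra with Killing form B, and suppose 𝔤 = 𝔨 ⊕ 𝔭 is a direct sum of real subspaces with [𝔨,𝔨] ⊆ 𝔨, [𝔨,𝔭] ⊆ 𝔭, [𝔭,𝔭] ⊆ 𝔨, such that B is negative definite on 𝔨 and positive definite on 𝔭. If 𝔞 is a ℂ-linear subspace of 𝔭^ℂ ⊆ 𝔤^ℂ satisfying [𝔞, 𝔞] ⊆ 𝔞 (i.e. 𝔞 is a complex Lie subalgebra contained in 𝔭^ℂ), then [𝔞, 𝔞] = 0; that is, every complex Lie subalgebra of 𝔤^ℂ contained in 𝔭^ℂ is abelian. -/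
open scoped TensorProduct

section Aux

variable {L : Type*} [LieRing L] [LieAlgebra ℝ L]

lemma aux_bracket_mem (𝔨 𝔭 : Submodule ℝ L)
    (hpp : ∀ x ∈ 𝔭, ∀ y ∈ 𝔭, ⁅x, y⁆ ∈ 𝔨)
    {X Y : ℂ ⊗[ℝ] L} (hX : X ∈ Submodule.baseChange ℂ 𝔭)
    (hY : Y ∈ Submodule.baseChange ℂ 𝔭) :
    ⁅X, Y⁆ ∈ Submodule.baseChange ℂ 𝔨 := by
  rw [Submodule.baseChange_eq_span] at hX hY
  induction hX using Submodule.span_induction with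
  | mem x hx =>
    obtain ⟨m, hm, rfl⟩ := hx
    induction hY using Submodule.span_induction with
    | mem y hy =>
      obtain ⟨n, hn, rfl⟩ := hy
      show ⁅(1 : ℂ) ⊗ₜ[ℝ] m, (1 : ℂ) ⊗ₜ[ℝ] n⁆ ∈ _
      rw [LieAlgebra.ExtendScalars.bracket_tmul, one_mul]
      exact Submodule.tmul_mem_baseChange_of_mem 1 (hpp m hm n hn)
    | zero =>
      have h : ⁅(TensorProduct.mk ℝ ℂ L 1) m, (0 : ℂ ⊗[ℝ] L)⁆ = 0 :=
        lie_zero ((TensorProduct.mk ℝ ℂ L 1) m)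
      rw [h]; exact Submodule.zero_mem _
    | add y z _ _ hy hz =>
      have h : ⁅(TensorProduct.mk ℝ ℂ L 1) m, y + z⁆ =
          ⁅(TensorProduct.mk ℝ ℂ L 1) m, y⁆ + ⁅(TensorProduct.mk ℝ ℂ L 1) m, z⁆ :=
        lie_add ((TensorProduct.mk ℝ ℂ L 1) m) y z
      rw [h]; exact Submodule.add_mem _ hy hz
    | smul c y _ hy =>
      have h : ⁅(TensorProduct.mk ℝ ℂ L 1) m, c • y⁆ =
          c • ⁅(TensorProduct.mk ℝ ℂ L 1) m, y⁆ :=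
        lie_smul c ((TensorProduct.mk ℝ ℂ L 1) m) y
      rw [h]; exact Submodule.smul_mem _ c hy
  | zero =>
    have h : ⁅(0 : ℂ ⊗[ℝ] L), Y⁆ = 0 := zero_lie Y
    rw [h]; exact Submodule.zero_mem _
  | add x y _ _ hx hy =>
    have h : ⁅x + y, Y⁆ = ⁅x, Y⁆ + ⁅y, Y⁆ := add_lie x y Y
    rw [h]; exact Submodule.add_mem _ hx hy
  | smul c x _ hx =>
    have h : ⁅c • x, Y⁆ = c • ⁅x, Y⁆ := smul_lie c x Y
    rw [h]; exact Submodule.smul_mem _ c hx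

lemma aux_disjoint (𝔨 𝔭 : Submodule ℝ L) (hcompl : IsCompl 𝔨 𝔭)
    {Z : ℂ ⊗[ℝ] L} (hZk : Z ∈ Submodule.baseChange ℂ 𝔨)
    (hZp : Z ∈ Submodule.baseChange ℂ 𝔭) : Z = 0 := by
  set π : L →ₗ[ℝ] L := 𝔭.subtype ∘ₗ (𝔭.projectionOnto 𝔨 hcompl.symm) with hπ
  have hπp : ∀ x ∈ 𝔭, π x = x := by
    intro x hx
    have := Submodule.projectionOnto_apply_of_mem_left hcompl.symm hx
    simp [hπ, this]
  have hπk : ∀ x ∈ 𝔨, π x = 0 := by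
    intro x hx
    have := Submodule.projectionOnto_apply_of_mem_right hcompl.symm hx
    simp [hπ, this]
  set P := LinearMap.baseChange ℂ π with hP
  have h1 : P Z = Z := by
    clear hZk
    rw [Submodule.baseChange_eq_span] at hZp
    induction hZp using Submodule.span_induction with
    | mem x hx =>
      obtain ⟨m, hm, rfl⟩ := hx
      show P ((1 : ℂ) ⊗ₜ[ℝ] m) = _
      rw [hP, LinearMap.baseChange_tmul, hπp m hm]
      rfl
    | zero => simp
    | add x y _ _ hx hy => rw [map_add, hx, hy]
    | smul c x _ hx => rw [map_smul, hx]
  have h2 : P Z = 0 := by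
    clear hZp h1
    rw [Submodule.baseChange_eq_span] at hZk
    induction hZk using Submodule.span_induction with
    | mem x hx =>
      obtain ⟨m, hm, rfl⟩ := hx
      show P ((1 : ℂ) ⊗ₜ[ℝ] m) = _
      rw [hP, LinearMap.baseChange_tmul, hπk m hm, TensorProduct.tmul_zero]
    | zero => simp
    | add x y _ _ hx hy => rw [map_add, hx, hy, add_zero]
    | smul c x _ hx => rw [map_smul, hx, smul_zero]
  rw [← h1, h2]

end Aux

/-- Let `𝔤 = 𝔨 ⊕ 𝔭` be a Cartan decomposition of a finite-dimensional real Lie algebra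
whose Killing form is negative definite on `𝔨` and positive definite on `𝔭`. Every
complex Lie subalgebra of `𝔤^ℂ` contained in `𝔭^ℂ` is abelian. -/
theorem subalgebra_in_pC_is_abelian {L : Type*} [LieRing L] [LieAlgebra ℝ L]
    [Module.Finite ℝ L]
    (𝔨 𝔭 : Submodule ℝ L) (hcompl : IsCompl 𝔨 𝔭)
    (hkk : ∀ x ∈ 𝔨, ∀ y ∈ 𝔨, ⁅x, y⁆ ∈ 𝔨)
    (hkp : ∀ x ∈ 𝔨, ∀ y ∈ 𝔭, ⁅x, y⁆ ∈ 𝔭)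
    (hpp : ∀ x ∈ 𝔭, ∀ y ∈ 𝔭, ⁅x, y⁆ ∈ 𝔨)
    (hneg : ∀ x ∈ 𝔨, x ≠ 0 → killingForm ℝ L x x < 0)
    (hpos : ∀ x ∈ 𝔭, x ≠ 0 → 0 < killingForm ℝ L x x)
    (𝔞 : Submodule ℂ (ℂ ⊗[ℝ] L)) (h𝔞 : 𝔞 ≤ Submodule.baseChange ℂ 𝔭)
    (hsub : ∀ X ∈ 𝔞, ∀ Y ∈ 𝔞, ⁅X, Y⁆ ∈ 𝔞) :
    ∀ X ∈ 𝔞, ∀ Y ∈ 𝔞, ⁅X, Y⁆ = (0 : ℂ ⊗[ℝ] L) := by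
  intro X hX Y hY
  exact aux_disjoint 𝔨 𝔭 hcompl
    (aux_bracket_mem 𝔨 𝔭 hpp (h𝔞 hX) (h𝔞 hY))
    (h𝔞 (hsub X hX Y hY))
end
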